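/- arXiv:1201.1521 — 5 statements merged into one kernel-verified Lean document; each statement's English description precedes it below -/
import Mathlib

section
/- For any classical channel N with finite input alphabet X and finite output alphabet Y, and any integer n ≥ 2, the supremum over all families {B_y}_{y∈Y} of Hermitian operators on ℂ^n with 0 ≤ B_y ≤ I of Rad{ Σ_{y∈Y} N(y|x)·B_y }_{x∈X} is equal to the supremum of the same quantity taken only over families {B_y}_{y∈Y} in which every B_y is an orthogonal projection on ℂ^n (i.e., B_y is Hermitian and B_y² = B_y). -/
open scoped Matrix Kronecker BigOperators Matrix.Norms.L2Operator ComplexOrder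
open Matrix Finset

noncomputable section

/-- A classical channel: `N x y` is the probability of output `y` given input `x`. -/
def IsChannel {X Y : Type*} [Fintype Y] (N : X → Y → ℝ) : Prop :=
  (∀ x y, 0 ≤ N x y) ∧ ∀ x, ∑ y, N x y = 1

/-- The unassisted one-shot success probability of a channel. -/
def Succ {X Y : Type*} [Fintype X] [Fintype Y] [Nonempty X]
    (N : X → Y → ℝ) : ℝ :=
  ⨆ z : X × X × (Y → Bool),
    (1 / 2) * (∑ y, if z.2.2 y = false then N z.1 y else 0) +
      (1 / 2) * (∑ y, if z.2.2 y = true then N z.2.1 y else 0)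

/-- A two-part input-output correlation: `D r s p q` is the probability of
outputs `(p, q)` given inputs `(r, s)`. -/
def IsCorrelation {R S P Q : Type*} [Fintype P] [Fintype Q]
    (D : R → S → P → Q → ℝ) : Prop :=
  (∀ r s p q, 0 ≤ D r s p q) ∧ ∀ r s, ∑ p, ∑ q, D r s p q = 1

/-- The non-signaling condition for a two-part correlation. -/
def NonSignaling {R S P Q : Type*} [Fintype P] [Fintype Q]
    (D : R → S → P → Q → ℝ) : Prop :=
  (∀ r p s s', ∑ q, D r s p q = ∑ q, D r s' p q) ∧
    ∀ s q r r', ∑ p, D r s p q = ∑ p, D r' s p q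

/-- `SuccD N D` : the optimal success probability for transmitting one bit
across the channel `N` with the assistance of the correlation `D`, i.e. the
maximum over deterministic protocols `(e, f, g, h)`. -/
def SuccD {X Y R S P Q : Type*} [Fintype X] [Fintype Y] [Fintype R] [Fintype S]
    [Fintype P] [Fintype Q] [DecidableEq P] [DecidableEq Q] [DecidableEq Y]
    [Nonempty X] [Nonempty R] [Nonempty S]
    (N : X → Y → ℝ) (D : R → S → P → Q → ℝ) : ℝ :=
  ⨆ π : (Bool → R) × (Bool → P → X) × (Y → S) × (Y → Q → Bool),
    (1 / 2) * ∑ a : Bool, ∑ p, ∑ y, ∑ q,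
      D (π.1 a) (π.2.2.1 y) p q * N (π.2.1 a p) y *
        (if π.2.2.2 y q = a then 1 else 0)

/-- The non-signaling assisted one-shot success probability: the supremum of
`SuccD N D` over all non-signaling correlations `D` (over all finite alphabets). -/
def SuccNS {X Y : Type*} [Fintype X] [Fintype Y] [DecidableEq Y] [Nonempty X]
    (N : X → Y → ℝ) : ℝ :=
  sSup { v : ℝ | ∃ (nR nS nP nQ : ℕ)
    (D : Fin (nR + 1) → Fin (nS + 1) → Fin nP → Fin nQ → ℝ),
    IsCorrelation D ∧ NonSignaling D ∧ v = SuccD N D }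

/-- Local-deterministic correlations. -/
def IsLocalDet {R S P Q : Type*} [DecidableEq P] [DecidableEq Q]
    (D : R → S → P → Q → ℝ) : Prop :=
  ∃ (φ : R → P) (ψ : S → Q), ∀ r s p q,
    D r s p q = (if p = φ r then 1 else 0) * (if q = ψ s then 1 else 0)

/-- Local correlations: finite convex combinations of local-deterministic ones. -/
def IsLocal {R S P Q : Type*} [DecidableEq P] [DecidableEq Q]
    (D : R → S → P → Q → ℝ) : Prop :=
  ∃ (n : ℕ) (w : Fin n → ℝ) (L : Fin n → R → S → P → Q → ℝ),
    (∀ i, 0 ≤ w i) ∧ (∑ i, w i = 1) ∧ (∀ i, IsLocalDet (L i)) ∧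
      ∀ r s p q, D r s p q = ∑ i, w i * L i r s p q

/-- The local fraction of a correlation. -/
def locFrac {R S P Q : Type*} [Fintype P] [Fintype Q] [DecidableEq P] [DecidableEq Q]
    (D : R → S → P → Q → ℝ) : ℝ :=
  sSup { α : ℝ | 0 ≤ α ∧ α ≤ 1 ∧ ∃ L F : R → S → P → Q → ℝ,
    IsLocal L ∧ IsCorrelation F ∧ NonSignaling F ∧
      ∀ r s p q, D r s p q = α * L r s p q + (1 - α) * F r s p q }

/-- Binary quantum correlations: all four alphabets are `Bool`, and the
correlation arises from local POVM measurements on a shared bipartite state. -/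
def IsBinaryQuantum (D : Bool → Bool → Bool → Bool → ℝ) : Prop :=
  ∃ (nA nB : ℕ)
    (Λ : Matrix (Fin (nA + 1) × Fin (nB + 1)) (Fin (nA + 1) × Fin (nB + 1)) ℂ)
    (A : Bool → Bool → Matrix (Fin (nA + 1)) (Fin (nA + 1)) ℂ)
    (B : Bool → Bool → Matrix (Fin (nB + 1)) (Fin (nB + 1)) ℂ),
    Λ.PosSemidef ∧ Λ.trace = 1 ∧
    (∀ r p, (A r p).PosSemidef) ∧ (∀ r, A r false + A r true = 1) ∧
    (∀ s q, (B s q).PosSemidef) ∧ (∀ s, B s false + B s true = 1) ∧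
    ∀ r s p q, (D r s p q : ℂ) = ((A r p ⊗ₖ B s q) * Λ).trace

/-- The binary-quantum assisted one-shot success probability. -/
def SuccQb {X Y : Type*} [Fintype X] [Fintype Y] [DecidableEq Y] [Nonempty X]
    (N : X → Y → ℝ) : ℝ :=
  sSup { v : ℝ | ∃ D : Bool → Bool → Bool → Bool → ℝ,
    IsBinaryQuantum D ∧ v = SuccD N D }

/-- The radius of a finite family of operators on `ℂ^n`, with respect to the
`ℓ²` operator norm: the minimum over Hermitian `C` of `max_i ‖H i − C‖`. -/
def matRad {n : ℕ} {I : Type*} [Fintype I] [Nonempty I]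
    (H : I → Matrix (Fin n) (Fin n) ℂ) : ℝ :=
  ⨅ C : { C : Matrix (Fin n) (Fin n) ℂ // C.IsHermitian }, ⨆ i, ‖H i - C.1‖

/-- The `n`-dimensional entanglement-assisted one-shot success probability. -/
def SuccQn {X Y : Type*} [Fintype X] [Fintype Y] (n : ℕ) (N : X → Y → ℝ) : ℝ :=
  sSup { v : ℝ | ∃ (Λ : Matrix (Fin n × Fin n) (Fin n × Fin n) ℂ)
      (A : Bool → X → Matrix (Fin n) (Fin n) ℂ)
      (B : Y → Bool → Matrix (Fin n) (Fin n) ℂ),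
      Λ.PosSemidef ∧ Λ.trace = 1 ∧
      (∀ a x, (A a x).PosSemidef) ∧ (∀ a, ∑ x, A a x = 1) ∧
      (∀ y b, (B y b).PosSemidef) ∧ (∀ y, B y false + B y true = 1) ∧
      v = (1 / 2) * ∑ a : Bool, ∑ x, ∑ y,
            N x y * (((A a x ⊗ₖ B y a) * Λ).trace).re }

/-- The channel of Prevedel et al. -/
def Mchan : Fin 4 → Fin 6 → ℝ :=
  ![![1/3, 0, 1/3, 0, 1/3, 0],
    ![1/3, 0, 0, 1/3, 0, 1/3],
    ![0, 1/3, 1/3, 0, 0, 1/3],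
    ![0, 1/3, 0, 1/3, 1/3, 0]]

/-- The mod-2 inner product of the binary representations of `i` and `j`
(restricted to the first `s` bits), as a `Bool` (`true` = 1). -/
def binIP (s i j : ℕ) : Bool :=
  decide ((((Finset.range s).filter fun k => i.testBit k ∧ j.testBit k).card) % 2 = 1)

/-- The output distributions `ℓ_i` of the channel `T`:
`ℓ_i (j, t) = (2^s − 1)⁻¹ · [b_i · b_j = t]`, where the output pair `(j, t)`
with `j ∈ {1, …, 2^s − 1}` is encoded as `(j', t) : Fin (2^s - 1) × Bool`
with `j = j' + 1`, and `t = true` encodes `1`. -/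
def Tchan (s : ℕ) : Fin (2 ^ s) → Fin (2 ^ s - 1) × Bool → ℝ :=
  fun i jt =>
    if binIP s i.val (jt.1.val + 1) = jt.2 then ((2 : ℝ) ^ s - 1)⁻¹ else 0


section AuxRad
variable {n : ℕ}


lemma aux_sq_le {B : Matrix (Fin n) (Fin n) ℂ} (hB : B.PosSemidef)
    (hB1 : ((1 : Matrix (Fin n) (Fin n) ℂ) - B).PosSemidef) : (B - B * B).PosSemidef := by
  have key : ∀ S : Matrix (Fin n) (Fin n) ℂ, S * S = B →
      S * ((1 : Matrix (Fin n) (Fin n) ℂ) - B) * S = B - B * B := by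
    intro S h; rw [← h]; noncomm_ring
  open scoped MatrixOrder in
  · have hB0 : (0 : Matrix (Fin n) (Fin n) ℂ) ≤ B := Matrix.nonneg_iff_posSemidef.mpr hB
    have h1 : ((CFC.sqrt B)ᴴ * ((1 : Matrix (Fin n) (Fin n) ℂ) - B) * CFC.sqrt B).PosSemidef :=
      hB1.conjTranspose_mul_mul_same _
    rwa [← Matrix.star_eq_conjTranspose, (IsSelfAdjoint.of_nonneg (CFC.sqrt_nonneg B)).star_eq,
      key _ (CFC.sqrt_mul_sqrt_self B hB0)] at h1

lemma aux_norm_le_one {B : Matrix (Fin n) (Fin n) ℂ} (hB : B.PosSemidef)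
    (hB1 : ((1 : Matrix (Fin n) (Fin n) ℂ) - B).PosSemidef) : ‖B‖ ≤ 1 := by
  rw [Matrix.l2_opNorm_def]
  apply ContinuousLinearMap.opNorm_le_bound _ zero_le_one
  intro x
  rw [one_mul]
  set y : EuclideanSpace ℂ (Fin n) :=
    ((Matrix.toEuclideanLin (𝕜 := ℂ) (m := Fin n) (n := Fin n)).trans
      LinearMap.toContinuousLinearMap B) x with hy
  have hyv : (y : Fin n → ℂ) = B *ᵥ (x : Fin n → ℂ) := rfl
  have hsq : ‖y‖ ^ 2 ≤ ‖x‖ ^ 2 := by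
    have e1 : ‖y‖ ^ 2 = RCLike.re (dotProduct (star (y : Fin n → ℂ)) (y : Fin n → ℂ)) := by
      rw [← inner_self_eq_norm_sq (𝕜 := ℂ) y, EuclideanSpace.inner_eq_star_dotProduct, dotProduct_comm]
    have e2 : ‖x‖ ^ 2 = RCLike.re (dotProduct (star (x : Fin n → ℂ)) (x : Fin n → ℂ)) := by
      rw [← inner_self_eq_norm_sq (𝕜 := ℂ) x, EuclideanSpace.inner_eq_star_dotProduct, dotProduct_comm]
    rw [e1, e2, hyv]
    set v := (x : Fin n → ℂ)
    have e3 : dotProduct (star (B *ᵥ v)) (B *ᵥ v)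
        = dotProduct (star v) ((B * B) *ᵥ v) := by
      simp only [Matrix.star_mulVec, dotProduct_mulVec, Matrix.vecMul_vecMul, (show Bᴴ = B from hB.1)]
    rw [e3]
    have h4 : RCLike.re (dotProduct (star v) ((B * B) *ᵥ v))
        ≤ RCLike.re (dotProduct (star v) (B *ᵥ v)) := by
      have := (aux_sq_le hB hB1).re_dotProduct_nonneg v
      rw [Matrix.sub_mulVec, dotProduct_sub, map_sub] at this
      linarith
    have h5 : RCLike.re (dotProduct (star v) (B *ᵥ v))
        ≤ RCLike.re (dotProduct (star v) v) := by
      have := hB1.re_dotProduct_nonneg v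
      rw [Matrix.sub_mulVec, dotProduct_sub, map_sub, Matrix.one_mulVec] at this
      linarith
    linarith
  nlinarith [norm_nonneg y, norm_nonneg x]



lemma aux_weight_sum (lam : Fin n → ℝ) :
    ∑ S ∈ (univ : Finset (Fin n)).powerset,
      (∏ i ∈ S, lam i) * ∏ i ∈ Sᶜ, (1 - lam i) = 1 := by
  have := Finset.prod_add lam (fun i => 1 - lam i) (univ : Finset (Fin n))
  simp only [add_sub_cancel, Finset.prod_const_one] at this
  simp only [Finset.compl_eq_univ_sdiff]
  rw [← this]

lemma aux_weight_marginal (lam : Fin n → ℝ) (i : Fin n) :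
    ∑ S ∈ (univ : Finset (Fin n)).powerset,
      ((∏ j ∈ S, lam j) * ∏ j ∈ Sᶜ, (1 - lam j)) * (if i ∈ S then 1 else 0) = lam i := by
  have hins : insert i ((univ : Finset (Fin n)).erase i) = univ :=
    Finset.insert_erase (mem_univ i)
  have hni : i ∉ (univ : Finset (Fin n)).erase i := Finset.notMem_erase i _
  rw [← hins, Finset.sum_powerset_insert hni]
  have h1 : ∑ t ∈ ((univ : Finset (Fin n)).erase i).powerset,
      ((∏ j ∈ t, lam j) * ∏ j ∈ tᶜ, (1 - lam j)) * (if i ∈ t then 1 else 0) = 0 := by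
    apply Finset.sum_eq_zero
    intro t ht
    rw [Finset.mem_powerset] at ht
    have : i ∉ t := fun h => hni (ht h)
    simp [this]
  rw [h1, zero_add]
  have h2 : ∀ t ∈ ((univ : Finset (Fin n)).erase i).powerset,
      ((∏ j ∈ insert i t, lam j) * ∏ j ∈ (insert i t)ᶜ, (1 - lam j)) *
        (if i ∈ insert i t then 1 else 0)
      = lam i * ((∏ j ∈ t, lam j) * ∏ j ∈ ((univ : Finset (Fin n)).erase i) \ t, (1 - lam j)) := by
    intro t ht
    rw [Finset.mem_powerset] at ht
    have hit : i ∉ t := fun h => hni (ht h)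
    have hcompl : (insert i t)ᶜ = ((univ : Finset (Fin n)).erase i) \ t := by
      ext j
      simp only [Finset.mem_compl, Finset.mem_insert, Finset.mem_sdiff, Finset.mem_erase,
        Finset.mem_univ, and_true, true_and]
      tauto
    rw [Finset.prod_insert hit, hcompl, if_pos (Finset.mem_insert_self i t)]
    ring
  rw [Finset.sum_congr rfl h2, ← Finset.mul_sum]
  have h3 : ∑ t ∈ ((univ : Finset (Fin n)).erase i).powerset,
      (∏ j ∈ t, lam j) * ∏ j ∈ ((univ : Finset (Fin n)).erase i) \ t, (1 - lam j) = 1 := by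
    have := Finset.prod_add lam (fun j => 1 - lam j) ((univ : Finset (Fin n)).erase i)
    simp only [add_sub_cancel, Finset.prod_const_one] at this
    rw [← this]
  rw [h3, mul_one]

lemma aux_proj_decomp {B : Matrix (Fin n) (Fin n) ℂ} (hB : B.PosSemidef)
    (hB1 : ((1 : Matrix (Fin n) (Fin n) ℂ) - B).PosSemidef) :
    B ∈ convexHull ℝ {M : Matrix (Fin n) (Fin n) ℂ | M.IsHermitian ∧ M * M = M} := by
  classical
  set U : Matrix (Fin n) (Fin n) ℂ := (hB.1.eigenvectorUnitary : Matrix (Fin n) (Fin n) ℂ) with hU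
  set lam : Fin n → ℝ := hB.1.eigenvalues with hlam
  have hUmem := hB.1.eigenvectorUnitary.2
  rw [Unitary.mem_iff] at hUmem
  obtain ⟨hU1, hU2⟩ := hUmem
  -- star U * U = 1 and U * star U = 1
  have hspec : B = U * diagonal (RCLike.ofReal ∘ lam) * star U := hB.1.spectral_theorem
  -- eigenvalues in [0,1]
  have h0 : ∀ i, 0 ≤ lam i := hB.eigenvalues_nonneg
  have h1 : ∀ i, lam i ≤ 1 := by
    intro i
    have hpsd : ((star U) * ((1 : Matrix (Fin n) (Fin n) ℂ) - B) * U).PosSemidef := by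
      have := hB1.conjTranspose_mul_mul_same (B := U)
      rwa [← Matrix.star_eq_conjTranspose] at this
    have heq : (star U) * ((1 : Matrix (Fin n) (Fin n) ℂ) - B) * U
        = diagonal (fun j => 1 - (lam j : ℂ)) := by
      rw [Matrix.mul_sub, Matrix.sub_mul, mul_one, hU1]
      have : star U * B * U = diagonal (RCLike.ofReal ∘ lam) := by
        have := hB.1.conjStarAlgAut_star_eigenvectorUnitary
        rw [Unitary.conjStarAlgAut_star_apply] at this
        rwa [← hU] at this
      rw [this, ← Matrix.diagonal_one, Matrix.diagonal_sub]
      congr 1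
    rw [heq, posSemidef_diagonal_iff] at hpsd
    have := hpsd i
    rw [Complex.le_def] at this
    simp at this
    linarith [this]
  -- the projections
  set D : Finset (Fin n) → Matrix (Fin n) (Fin n) ℂ :=
    fun S => diagonal (fun i => if i ∈ S then (1 : ℂ) else 0) with hD
  set P : Finset (Fin n) → Matrix (Fin n) (Fin n) ℂ := fun S => U * D S * star U with hP
  set w : Finset (Fin n) → ℝ := fun S => (∏ i ∈ S, lam i) * ∏ i ∈ Sᶜ, (1 - lam i) with hw
  have hwnn : ∀ S, 0 ≤ w S := fun S =>
    mul_nonneg (Finset.prod_nonneg fun i _ => h0 i)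
      (Finset.prod_nonneg fun i _ => by linarith [h1 i])
  have hwsum : ∑ S ∈ (univ : Finset (Fin n)).powerset, w S = 1 := aux_weight_sum lam
  have hPmem : ∀ S, P S ∈ {M : Matrix (Fin n) (Fin n) ℂ | M.IsHermitian ∧ M * M = M} := by
    intro S
    constructor
    · show (U * D S * star U)ᴴ = U * D S * star U
      rw [Matrix.conjTranspose_mul, Matrix.conjTranspose_mul, ← Matrix.star_eq_conjTranspose U,
        ← Matrix.star_eq_conjTranspose (star U), star_star]
      have hDD : (D S)ᴴ = D S := by
        rw [hD]
        simp only [Matrix.diagonal_conjTranspose]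
        exact congrArg Matrix.diagonal (funext fun i => by by_cases h : i ∈ S <;> simp [h])
      rw [hDD, mul_assoc]

    · show (U * D S * star U) * (U * D S * star U) = U * D S * star U
      have hDD2 : D S * D S = D S := by
        rw [hD, Matrix.diagonal_mul_diagonal]
        exact congrArg Matrix.diagonal (funext fun i => by by_cases h : i ∈ S <;> simp [h])

      calc U * D S * star U * (U * D S * star U)
          = U * D S * (star U * U) * D S * star U := by noncomm_ring
        _ = U * (D S * D S) * star U := by rw [hU1, mul_one]; noncomm_ring
        _ = U * D S * star U := by rw [hDD2]
  -- the convex combination equals B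
  have hcomb : ∑ S ∈ (univ : Finset (Fin n)).powerset, w S • P S = B := by
    have hsum : ∑ S ∈ (univ : Finset (Fin n)).powerset, w S • D S
        = diagonal (RCLike.ofReal ∘ lam) := by
      ext i j
      rw [Matrix.sum_apply]
      by_cases hij : i = j
      · subst hij
        simp only [Matrix.smul_apply, hD, Matrix.diagonal_apply_eq, Function.comp_apply]
        calc ∑ S ∈ (univ : Finset (Fin n)).powerset, w S • (if i ∈ S then (1:ℂ) else 0)
            = ∑ S ∈ (univ : Finset (Fin n)).powerset,
                ((w S * (if i ∈ S then 1 else 0) : ℝ) : ℂ) := by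
              apply Finset.sum_congr rfl
              intro S _
              by_cases h : i ∈ S <;> simp [h, Complex.real_smul]
          _ = ((lam i : ℝ) : ℂ) := by
              rw [← Complex.ofReal_sum]
              exact_mod_cast congrArg (fun r : ℝ => (r : ℂ)) (aux_weight_marginal lam i)
      · simp only [Matrix.smul_apply, hD, Matrix.diagonal_apply_ne _ hij, Function.comp_apply,
          smul_zero, Finset.sum_const_zero]
    calc ∑ S ∈ (univ : Finset (Fin n)).powerset, w S • P S
        = U * (∑ S ∈ (univ : Finset (Fin n)).powerset, w S • D S) * star U := by
          rw [Finset.mul_sum, Finset.sum_mul]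
          apply Finset.sum_congr rfl
          intro S _
          show w S • (U * D S * star U) = U * (w S • D S) * star U
          rw [mul_smul_comm, smul_mul_assoc]
      _ = B := by rw [hsum, ← hspec]
  rw [← hcomb]
  have hmem := Finset.centerMass_mem_convexHull ((univ : Finset (Fin n)).powerset)
    (fun S _ => hwnn S) (by rw [hwsum]; norm_num) (fun S _ => hPmem S)
  rwa [Finset.centerMass_eq_of_sum_1 _ P hwsum] at hmem

section AuxMat
variable {n : ℕ} {I : Type*} [Fintype I] [Nonempty I]

lemma aux_bddBelow (H : I → Matrix (Fin n) (Fin n) ℂ) :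
    BddBelow (Set.range fun C : { C : Matrix (Fin n) (Fin n) ℂ // C.IsHermitian } =>
      ⨆ i, ‖H i - C.1‖) := by
  refine ⟨0, ?_⟩
  rintro v ⟨C, rfl⟩
  show (0:ℝ) ≤ ⨆ i, ‖H i - C.1‖
  exact le_trans (norm_nonneg (H (Classical.arbitrary I) - C.1))
    (le_ciSup (f := fun i => ‖H i - C.1‖) (Set.Finite.bddAbove (Set.finite_range _))
      (Classical.arbitrary I))

lemma aux_matRad_le (H : I → Matrix (Fin n) (Fin n) ℂ)
    (C : Matrix (Fin n) (Fin n) ℂ) (hC : C.IsHermitian) :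
    matRad H ≤ ⨆ i, ‖H i - C‖ :=
  ciInf_le (aux_bddBelow H) ⟨C, hC⟩

lemma aux_matRad_lt (H : I → Matrix (Fin n) (Fin n) ℂ) {r : ℝ} (hr : matRad H < r) :
    ∃ C : { C : Matrix (Fin n) (Fin n) ℂ // C.IsHermitian }, (⨆ i, ‖H i - C.1‖) < r :=
  haveI : Nonempty { C : Matrix (Fin n) (Fin n) ℂ // C.IsHermitian } :=
    ⟨⟨0, Matrix.isHermitian_zero⟩⟩
  exists_lt_of_ciInf_lt hr

lemma aux_real_smul (a : ℝ) (M : Matrix (Fin n) (Fin n) ℂ) :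
    a • M = (a : ℂ) • M := by
  ext i j
  simp [Complex.real_smul]

example (a : ℝ) (M : Matrix (Fin n) (Fin n) ℂ) : ‖(a:ℂ) • M‖ = |a| * ‖M‖ := by
  rw [norm_smul]
  simp

example (a : ℝ) (C : Matrix (Fin n) (Fin n) ℂ) (hC : C.IsHermitian) :
    ((a:ℂ) • C).IsHermitian := by
  have : ((a:ℂ) • C)ᴴ = star (a:ℂ) • Cᴴ := Matrix.conjTranspose_smul _ _
  show ((a:ℂ) • C)ᴴ = (a:ℂ) • C
  rw [this, hC.eq, Complex.star_def, Complex.conj_ofReal]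

variable {X Y : Type*} [Fintype X] [Fintype Y] [Nonempty X]

lemma aux_mix_eq (N : X → Y → ℝ) (B₁ B₂ : Y → Matrix (Fin n) (Fin n) ℂ) (a b : ℝ)
    (x : X) (C₁ C₂ : Matrix (Fin n) (Fin n) ℂ) :
    (∑ y, (N x y : ℂ) • (a • B₁ + b • B₂) y) - (a • C₁ + b • C₂)
      = a • ((∑ y, (N x y : ℂ) • B₁ y) - C₁) + b • ((∑ y, (N x y : ℂ) • B₂ y) - C₂) := by
  simp only [Pi.add_apply, Pi.smul_apply, aux_real_smul]
  rw [Finset.sum_congr rfl (fun y _ => by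
    rw [smul_add, smul_comm ((N x y : ℂ)) ((a : ℂ)), smul_comm ((N x y : ℂ)) ((b : ℂ))]),
    Finset.sum_add_distrib, ← Finset.smul_sum, ← Finset.smul_sum, smul_sub, smul_sub]
  abel

lemma aux_convex (N : X → Y → ℝ) (B₁ B₂ : Y → Matrix (Fin n) (Fin n) ℂ) (a b : ℝ)
    (ha : 0 ≤ a) (hb : 0 ≤ b) (hab : a + b = 1) :
    matRad (fun x => ∑ y, (N x y : ℂ) • (a • B₁ + b • B₂) y)
      ≤ a * matRad (fun x => ∑ y, (N x y : ℂ) • B₁ y)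
        + b * matRad (fun x => ∑ y, (N x y : ℂ) • B₂ y) := by
  set r₁ := matRad (fun x => ∑ y, (N x y : ℂ) • B₁ y)
  set r₂ := matRad (fun x => ∑ y, (N x y : ℂ) • B₂ y)
  apply le_of_forall_pos_le_add
  intro ε hε
  obtain ⟨C₁, hC₁⟩ := aux_matRad_lt (fun x => ∑ y, (N x y : ℂ) • B₁ y)
    (show r₁ < r₁ + ε by linarith)
  obtain ⟨C₂, hC₂⟩ := aux_matRad_lt (fun x => ∑ y, (N x y : ℂ) • B₂ y)
    (show r₂ < r₂ + ε by linarith)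
  have hCherm : (a • C₁.1 + b • C₂.1).IsHermitian := by
    show (a • C₁.1 + b • C₂.1)ᴴ = a • C₁.1 + b • C₂.1
    rw [aux_real_smul, aux_real_smul, Matrix.conjTranspose_add, Matrix.conjTranspose_smul,
      Matrix.conjTranspose_smul, C₁.2.eq, C₂.2.eq]
    simp [Complex.star_def, Complex.conj_ofReal]
  refine le_trans (aux_matRad_le _ _ hCherm) (ciSup_le fun x => ?_)
  rw [aux_mix_eq N B₁ B₂ a b x C₁.1 C₂.1]
  have h1 : ‖(∑ y, (N x y : ℂ) • B₁ y) - C₁.1‖ < r₁ + ε :=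
    lt_of_le_of_lt (le_ciSup (f := fun x => ‖(∑ y, (N x y : ℂ) • B₁ y) - C₁.1‖)
      (Set.Finite.bddAbove (Set.finite_range _)) x) hC₁
  have h2 : ‖(∑ y, (N x y : ℂ) • B₂ y) - C₂.1‖ < r₂ + ε :=
    lt_of_le_of_lt (le_ciSup (f := fun x => ‖(∑ y, (N x y : ℂ) • B₂ y) - C₂.1‖)
      (Set.Finite.bddAbove (Set.finite_range _)) x) hC₂
  calc ‖a • ((∑ y, (N x y : ℂ) • B₁ y) - C₁.1) + b • ((∑ y, (N x y : ℂ) • B₂ y) - C₂.1)‖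
      ≤ ‖a • ((∑ y, (N x y : ℂ) • B₁ y) - C₁.1)‖
        + ‖b • ((∑ y, (N x y : ℂ) • B₂ y) - C₂.1)‖ := norm_add_le _ _
    _ = a * ‖(∑ y, (N x y : ℂ) • B₁ y) - C₁.1‖
        + b * ‖(∑ y, (N x y : ℂ) • B₂ y) - C₂.1‖ := by
        rw [aux_real_smul, aux_real_smul, norm_smul, norm_smul]
        simp [abs_of_nonneg ha, abs_of_nonneg hb]
    _ ≤ a * (r₁ + ε) + b * (r₂ + ε) := by
        have := mul_le_mul_of_nonneg_left h1.le ha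
        have := mul_le_mul_of_nonneg_left h2.le hb
        linarith
    _ = a * r₁ + b * r₂ + ε := by nlinarith [hab]

lemma aux_f_le_one (N : X → Y → ℝ) (hN0 : ∀ x y, 0 ≤ N x y) (hN1 : ∀ x, ∑ y, N x y = 1)
    (B : Y → Matrix (Fin n) (Fin n) ℂ) (hB : ∀ y, (B y).PosSemidef)
    (hB1 : ∀ y, ((1 : Matrix (Fin n) (Fin n) ℂ) - B y).PosSemidef) :
    matRad (fun x => ∑ y, (N x y : ℂ) • B y) ≤ 1 := by
  refine le_trans (aux_matRad_le _ 0 Matrix.isHermitian_zero) (ciSup_le fun x => ?_)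
  rw [sub_zero]
  calc ‖∑ y, (N x y : ℂ) • B y‖ ≤ ∑ y, ‖(N x y : ℂ) • B y‖ := norm_sum_le _ _
    _ ≤ ∑ y, N x y := by
        apply Finset.sum_le_sum
        intro y _
        rw [norm_smul, Complex.norm_real, Real.norm_eq_abs, abs_of_nonneg (hN0 x y)]
        have h := aux_norm_le_one (hB y) (hB1 y)
        have h2 := norm_nonneg (B y)
        nlinarith [hN0 x y]
    _ = 1 := hN1 x

end AuxMat
end AuxRad

/-- **Corollary 3.** In the radius formula for `Succ_{Q_n}(N)`, the supremum over
all families of operators `0 ≤ B_y ≤ I` equals the supremum over families of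
orthogonal projections. -/
theorem radius_sup_eq_sup_projections {X Y : Type*} [Fintype X] [Fintype Y] [Nonempty X]
    (N : X → Y → ℝ) (hN : IsChannel N) (n : ℕ) (hn : 2 ≤ n) :
    sSup { v : ℝ | ∃ B : Y → Matrix (Fin n) (Fin n) ℂ,
        (∀ y, (B y).PosSemidef) ∧
        (∀ y, ((1 : Matrix (Fin n) (Fin n) ℂ) - B y).PosSemidef) ∧
        v = matRad fun x => ∑ y, (N x y : ℂ) • B y } =
      sSup { v : ℝ | ∃ B : Y → Matrix (Fin n) (Fin n) ℂ,
        (∀ y, (B y).IsHermitian) ∧ (∀ y, B y * B y = B y) ∧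
        v = matRad fun x => ∑ y, (N x y : ℂ) • B y } := by
  classical
  obtain ⟨hN0, hN1⟩ := hN
  set Proj : Set (Matrix (Fin n) (Fin n) ℂ) := {M | M.IsHermitian ∧ M * M = M} with hProj
  have hproj : ∀ M : Matrix (Fin n) (Fin n) ℂ, M.IsHermitian → M * M = M →
      M.PosSemidef ∧ ((1 : Matrix (Fin n) (Fin n) ℂ) - M).PosSemidef := by
    intro M hH hM
    have hpsd : M.PosSemidef := by
      have := Matrix.posSemidef_conjTranspose_mul_self M
      rwa [hH.eq, hM] at this
    have h1H : ((1 : Matrix (Fin n) (Fin n) ℂ) - M).IsHermitian := by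
      show _ᴴ = _
      rw [Matrix.conjTranspose_sub, Matrix.conjTranspose_one, hH.eq]
    have h1M : ((1 : Matrix (Fin n) (Fin n) ℂ) - M) * ((1 : Matrix (Fin n) (Fin n) ℂ) - M)
        = 1 - M := by
      have h : ((1 : Matrix (Fin n) (Fin n) ℂ) - M) * ((1 : Matrix (Fin n) (Fin n) ℂ) - M)
          = 1 - M - M + M * M := by noncomm_ring
      rw [h, hM]
      abel
    have hpsd1 : ((1 : Matrix (Fin n) (Fin n) ℂ) - M).PosSemidef := by
      have := Matrix.posSemidef_conjTranspose_mul_self ((1 : Matrix (Fin n) (Fin n) ℂ) - M)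
      rwa [h1H.eq, h1M] at this
    exact ⟨hpsd, hpsd1⟩
  have hsub : { v : ℝ | ∃ B : Y → Matrix (Fin n) (Fin n) ℂ,
        (∀ y, (B y).IsHermitian) ∧ (∀ y, B y * B y = B y) ∧
        v = matRad fun x => ∑ y, (N x y : ℂ) • B y } ⊆
      { v : ℝ | ∃ B : Y → Matrix (Fin n) (Fin n) ℂ,
        (∀ y, (B y).PosSemidef) ∧
        (∀ y, ((1 : Matrix (Fin n) (Fin n) ℂ) - B y).PosSemidef) ∧
        v = matRad fun x => ∑ y, (N x y : ℂ) • B y } := by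
    rintro v ⟨B, hH, hM, rfl⟩
    exact ⟨B, fun y => (hproj (B y) (hH y) (hM y)).1, fun y => (hproj (B y) (hH y) (hM y)).2, rfl⟩
  have hbdd1 : BddAbove { v : ℝ | ∃ B : Y → Matrix (Fin n) (Fin n) ℂ,
        (∀ y, (B y).PosSemidef) ∧
        (∀ y, ((1 : Matrix (Fin n) (Fin n) ℂ) - B y).PosSemidef) ∧
        v = matRad fun x => ∑ y, (N x y : ℂ) • B y } := by
    refine ⟨1, ?_⟩
    rintro v ⟨B, hB, hB1, rfl⟩
    exact aux_f_le_one N hN0 hN1 B hB hB1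
  have hbdd2 : BddAbove { v : ℝ | ∃ B : Y → Matrix (Fin n) (Fin n) ℂ,
        (∀ y, (B y).IsHermitian) ∧ (∀ y, B y * B y = B y) ∧
        v = matRad fun x => ∑ y, (N x y : ℂ) • B y } := hbdd1.mono hsub
  have hne2 : { v : ℝ | ∃ B : Y → Matrix (Fin n) (Fin n) ℂ,
        (∀ y, (B y).IsHermitian) ∧ (∀ y, B y * B y = B y) ∧
        v = matRad fun x => ∑ y, (N x y : ℂ) • B y }.Nonempty := by
    exact ⟨_, ⟨fun _ => 0, fun y => Matrix.isHermitian_zero, fun y => by rw [mul_zero], rfl⟩⟩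
  have hne1 : { v : ℝ | ∃ B : Y → Matrix (Fin n) (Fin n) ℂ,
        (∀ y, (B y).PosSemidef) ∧
        (∀ y, ((1 : Matrix (Fin n) (Fin n) ℂ) - B y).PosSemidef) ∧
        v = matRad fun x => ∑ y, (N x y : ℂ) • B y }.Nonempty :=
    hne2.mono hsub |>.imp fun _ h => h
  have hconvOn : ConvexOn ℝ (Set.univ : Set (Y → Matrix (Fin n) (Fin n) ℂ))
      (fun B => matRad fun x => ∑ y, (N x y : ℂ) • B y) := by
    refine ⟨convex_univ, ?_⟩
    intro B₁ _ B₂ _ a b ha hb hab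
    exact aux_convex N B₁ B₂ a b ha hb hab
  apply le_antisymm
  · apply csSup_le hne1
    rintro v ⟨B, hB, hB1, rfl⟩
    have hmem : B ∈ convexHull ℝ (Set.univ.pi fun _ : Y => Proj) :=
      mem_convexHull_pi (fun y _ => aux_proj_decomp (hB y) (hB1 y))
    obtain ⟨P, hPmem, hle⟩ := hconvOn.exists_ge_of_mem_convexHull (Set.subset_univ _) hmem
    refine le_trans hle (le_csSup hbdd2 ?_)
    exact ⟨P, fun y => (hPmem y (Set.mem_univ y)).1, fun y => (hPmem y (Set.mem_univ y)).2, rfl⟩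
  · exact csSup_le_csSup hbdd1 hne2 hsub

end
end

section
/- For any classical channel N with finite input alphabet X and finite output alphabet Y, the non-signaling-assisted one-shot success probability satisfies Succ_NS(N) = 1/2 + (1/2)·Rad₁{ n_x : x ∈ X }. -/
open scoped Matrix Kronecker BigOperators Matrix.Norms.L2Operator ComplexOrder
open Matrix Finset

noncomputable section

set_option maxHeartbeats 1000000

theorem succD_le_center {X Y R S P Q : Type*} [Fintype X] [Fintype Y] [Fintype R] [Fintype S]
    [Fintype P] [Fintype Q] [DecidableEq P] [DecidableEq Q] [DecidableEq Y]
    [Nonempty X] [Nonempty R] [Nonempty S]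
    (N : X → Y → ℝ) (hN : IsChannel N) (D : R → S → P → Q → ℝ)
    (hD : IsCorrelation D) (hNS : NonSignaling D) (c : Y → ℝ) :
    SuccD N D ≤ 1 / 2 + (1 / 2) * ⨆ x : X, ∑ y, |N x y - c y| := by
  obtain ⟨hN0, hN1⟩ := hN
  obtain ⟨hD0, hD1⟩ := hD
  obtain ⟨hNSa, hNSb⟩ := hNS
  set Rc := ⨆ x : X, ∑ y, |N x y - c y| with hRcdef
  have hRc : ∀ x : X, ∑ y, |N x y - c y| ≤ Rc := fun x =>
    le_ciSup (f := fun x : X => ∑ y, |N x y - c y|) (Set.Finite.bddAbove (Set.finite_range _)) x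
  set t := ∑ y, c y with htdef
  rw [SuccD]
  apply ciSup_le
  rintro ⟨e, f, g, h⟩
  dsimp only
  rw [Fintype.sum_bool]
  -- abbreviations
  set s₀ : S := Classical.arbitrary S with hs₀
  set α : R → P → ℝ := fun r p => ∑ q, D r s₀ p q with hαdef
  have hα : ∀ (r : R) (p : P) (s : S), ∑ q, D r s p q = α r p := fun r p s => hNSa r p s s₀
  have hα0 : ∀ r p, 0 ≤ α r p := fun r p => Finset.sum_nonneg fun q _ => hD0 _ _ _ _
  have hα1 : ∀ r, ∑ p, α r p = 1 := fun r => hD1 r s₀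
  set A := ∑ p, ∑ y, ∑ q, D (e false) (g y) p q * N (f false p) y *
      (if h y q = false then (1:ℝ) else 0) with hAdef
  set A' := ∑ p, ∑ y, ∑ q, D (e true) (g y) p q * N (f true p) y *
      (if h y q = true then (1:ℝ) else 0) with hA'def
  set B := ∑ p, ∑ y, ∑ q, D (e true) (g y) p q * N (f true p) y *
      (if h y q = false then (1:ℝ) else 0) with hBdef
  have hAB1 : A' + B = 1 := by
    have e1 : A' + B = ∑ p, ∑ y, ∑ q, D (e true) (g y) p q * N (f true p) y := by
      rw [hA'def, hBdef, ← Finset.sum_add_distrib]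
      refine Finset.sum_congr rfl fun p _ => ?_
      rw [← Finset.sum_add_distrib]
      refine Finset.sum_congr rfl fun y _ => ?_
      rw [← Finset.sum_add_distrib]
      refine Finset.sum_congr rfl fun q _ => ?_
      cases hyq : h y q <;> simp [hyq]
    rw [e1]
    have e2 : ∀ p : P, ∑ y, ∑ q, D (e true) (g y) p q * N (f true p) y = α (e true) p := by
      intro p
      have : ∀ y : Y, ∑ q, D (e true) (g y) p q * N (f true p) y
          = α (e true) p * N (f true p) y := by
        intro y
        rw [← Finset.sum_mul, hα]
      rw [Finset.sum_congr rfl fun y _ => this y, ← Finset.mul_sum, hN1, mul_one]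
    rw [Finset.sum_congr rfl fun p _ => e2 p, hα1]
  -- decomposition
  set S1 := ∑ p, ∑ y, ∑ q, D (e false) (g y) p q * (N (f false p) y - c y) *
      (if h y q = false then (1:ℝ) else 0) with hS1def
  set S2 := ∑ p, ∑ y, ∑ q, D (e true) (g y) p q * (c y - N (f true p) y) *
      (if h y q = false then (1:ℝ) else 0) with hS2def
  set C1 := ∑ p, ∑ y, ∑ q, D (e false) (g y) p q * c y *
      (if h y q = false then (1:ℝ) else 0) with hC1def
  set C2 := ∑ p, ∑ y, ∑ q, D (e true) (g y) p q * c y *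
      (if h y q = false then (1:ℝ) else 0) with hC2def
  have hAC : A = S1 + C1 := by
    rw [hAdef, hS1def, hC1def, ← Finset.sum_add_distrib]
    refine Finset.sum_congr rfl fun p _ => ?_
    rw [← Finset.sum_add_distrib]
    refine Finset.sum_congr rfl fun y _ => ?_
    rw [← Finset.sum_add_distrib]
    exact Finset.sum_congr rfl fun q _ => by ring
  have hBC : B = C2 - S2 := by
    rw [hBdef, hS2def, hC2def, ← Finset.sum_sub_distrib]
    refine Finset.sum_congr rfl fun p _ => ?_
    rw [← Finset.sum_sub_distrib]
    refine Finset.sum_congr rfl fun y _ => ?_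
    rw [← Finset.sum_sub_distrib]
    exact Finset.sum_congr rfl fun q _ => by ring
  have swap3 : ∀ G : P → Y → Q → ℝ,
      ∑ p, ∑ y, ∑ q, G p y q = ∑ y, ∑ q, ∑ p, G p y q := by
    intro G
    rw [Finset.sum_comm]
    exact Finset.sum_congr rfl fun y _ => Finset.sum_comm
  have hCC : C1 = C2 := by
    rw [hC1def, hC2def, swap3, swap3]
    refine Finset.sum_congr rfl fun y _ => Finset.sum_congr rfl fun q _ => ?_
    have e1 : ∀ (r : R), ∑ p, D r (g y) p q * c y * (if h y q = false then (1:ℝ) else 0)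
        = (∑ p, D r (g y) p q) * (c y * (if h y q = false then (1:ℝ) else 0)) := by
      intro r
      rw [Finset.sum_mul]
      exact Finset.sum_congr rfl fun p _ => by ring
    rw [e1, e1, hNSb (g y) q (e false) (e true)]
  -- bounds on S1, S2
  have hS1le : S1 ≤ (Rc + (1 - t)) / 2 := by
    have step1 : S1 ≤ ∑ p, α (e false) p *
        ((∑ y, |N (f false p) y - c y|) + (1 - t)) / 2 := by
      rw [hS1def]
      have inner : ∀ p : P, ∑ y, ∑ q, D (e false) (g y) p q * (N (f false p) y - c y) *
          (if h y q = false then (1:ℝ) else 0)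
          ≤ α (e false) p * ((∑ y, |N (f false p) y - c y|) + (1 - t)) / 2 := by
        intro p
        have pb : ∀ y : Y, ∑ q, D (e false) (g y) p q * (N (f false p) y - c y) *
            (if h y q = false then (1:ℝ) else 0)
            ≤ α (e false) p * ((|N (f false p) y - c y| + (N (f false p) y - c y)) / 2) := by
          intro y
          rw [← hα (e false) p (g y), Finset.sum_mul]
          refine Finset.sum_le_sum fun q _ => ?_
          have hd := hD0 (e false) (g y) p q
          rw [mul_assoc]
          refine mul_le_mul_of_nonneg_left ?_ hd
          rcases le_or_gt 0 (N (f false p) y - c y) with hz | hz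
          · have : |N (f false p) y - c y| = N (f false p) y - c y := abs_of_nonneg hz
            rw [this]
            split <;> nlinarith
          · have : |N (f false p) y - c y| = -(N (f false p) y - c y) := abs_of_neg hz
            rw [this]
            split <;> nlinarith
        calc ∑ y, ∑ q, D (e false) (g y) p q * (N (f false p) y - c y) *
              (if h y q = false then (1:ℝ) else 0)
            ≤ ∑ y, α (e false) p *
              ((|N (f false p) y - c y| + (N (f false p) y - c y)) / 2) :=
              Finset.sum_le_sum fun y _ => pb y
          _ = α (e false) p * ((∑ y, |N (f false p) y - c y|) + (1 - t)) / 2 := by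
              rw [← Finset.mul_sum]
              have : ∑ y, (|N (f false p) y - c y| + (N (f false p) y - c y)) / 2
                  = ((∑ y, |N (f false p) y - c y|) + (1 - t)) / 2 := by
                rw [← Finset.sum_div, Finset.sum_add_distrib, Finset.sum_sub_distrib,
                  hN1 (f false p), ← htdef]
              rw [this, mul_div_assoc]
      exact Finset.sum_le_sum fun p _ => inner p
    have step2 : ∑ p, α (e false) p *
        ((∑ y, |N (f false p) y - c y|) + (1 - t)) / 2 ≤ (Rc + (1 - t)) / 2 := by
      have : ∀ p : P, α (e false) p * ((∑ y, |N (f false p) y - c y|) + (1 - t)) / 2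
          ≤ α (e false) p * (Rc + (1 - t)) / 2 := by
        intro p
        have := hRc (f false p)
        have h0 := hα0 (e false) p
        rw [div_le_div_iff_of_pos_right (by norm_num : (0:ℝ) < 2)]
        nlinarith
      calc ∑ p, α (e false) p * ((∑ y, |N (f false p) y - c y|) + (1 - t)) / 2
          ≤ ∑ p, α (e false) p * (Rc + (1 - t)) / 2 := Finset.sum_le_sum fun p _ => this p
        _ = (Rc + (1 - t)) / 2 := by
            rw [← Finset.sum_div, ← Finset.sum_mul, hα1]
            ring
    linarith
  have hS2le : S2 ≤ (Rc - (1 - t)) / 2 := by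
    have step1 : S2 ≤ ∑ p, α (e true) p *
        ((∑ y, |N (f true p) y - c y|) - (1 - t)) / 2 := by
      rw [hS2def]
      have inner : ∀ p : P, ∑ y, ∑ q, D (e true) (g y) p q * (c y - N (f true p) y) *
          (if h y q = false then (1:ℝ) else 0)
          ≤ α (e true) p * ((∑ y, |N (f true p) y - c y|) - (1 - t)) / 2 := by
        intro p
        have pb : ∀ y : Y, ∑ q, D (e true) (g y) p q * (c y - N (f true p) y) *
            (if h y q = false then (1:ℝ) else 0)
            ≤ α (e true) p * ((|N (f true p) y - c y| + (c y - N (f true p) y)) / 2) := by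
          intro y
          rw [← hα (e true) p (g y), Finset.sum_mul]
          refine Finset.sum_le_sum fun q _ => ?_
          have hd := hD0 (e true) (g y) p q
          rw [mul_assoc]
          refine mul_le_mul_of_nonneg_left ?_ hd
          rcases le_or_gt 0 (N (f true p) y - c y) with hz | hz
          · have : |N (f true p) y - c y| = N (f true p) y - c y := abs_of_nonneg hz
            rw [this]
            split <;> nlinarith
          · have : |N (f true p) y - c y| = -(N (f true p) y - c y) := abs_of_neg hz
            rw [this]
            split <;> nlinarith
        calc ∑ y, ∑ q, D (e true) (g y) p q * (c y - N (f true p) y) *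
              (if h y q = false then (1:ℝ) else 0)
            ≤ ∑ y, α (e true) p *
              ((|N (f true p) y - c y| + (c y - N (f true p) y)) / 2) :=
              Finset.sum_le_sum fun y _ => pb y
          _ = α (e true) p * ((∑ y, |N (f true p) y - c y|) - (1 - t)) / 2 := by
              rw [← Finset.mul_sum]
              have : ∑ y, (|N (f true p) y - c y| + (c y - N (f true p) y)) / 2
                  = ((∑ y, |N (f true p) y - c y|) - (1 - t)) / 2 := by
                rw [← Finset.sum_div, Finset.sum_add_distrib, Finset.sum_sub_distrib,
                  hN1 (f true p), ← htdef]
                ring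
              rw [this, mul_div_assoc]
      exact Finset.sum_le_sum fun p _ => inner p
    have step2 : ∑ p, α (e true) p *
        ((∑ y, |N (f true p) y - c y|) - (1 - t)) / 2 ≤ (Rc - (1 - t)) / 2 := by
      have : ∀ p : P, α (e true) p * ((∑ y, |N (f true p) y - c y|) - (1 - t)) / 2
          ≤ α (e true) p * (Rc - (1 - t)) / 2 := by
        intro p
        have := hRc (f true p)
        have h0 := hα0 (e true) p
        rw [div_le_div_iff_of_pos_right (by norm_num : (0:ℝ) < 2)]
        nlinarith
      calc ∑ p, α (e true) p * ((∑ y, |N (f true p) y - c y|) - (1 - t)) / 2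
          ≤ ∑ p, α (e true) p * (Rc - (1 - t)) / 2 := Finset.sum_le_sum fun p _ => this p
        _ = (Rc - (1 - t)) / 2 := by
            rw [← Finset.sum_div, ← Finset.sum_mul, hα1]
            ring
    linarith
  -- assemble
  have : A' + A ≤ 1 + Rc := by
    have := hAC
    have := hBC
    have := hCC
    linarith
  linarith


theorem radius_le_dual {X Y : Type*} [Fintype X] [Fintype Y] [DecidableEq Y]
    [Nonempty X] [Nonempty Y] (N : X → Y → ℝ)
    (hN0 : ∀ x y, 0 ≤ N x y) (hN1 : ∀ x, ∑ y, N x y = 1) :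
    ∃ M : ℝ, (((0 : Y → ℝ), M) ∈
        convexHull ℝ (Set.range (fun i : X × (Y → Bool) =>
          (((fun y => if i.2 y then (1:ℝ) else -1) : Y → ℝ),
            ∑ y, (if i.2 y then (1:ℝ) else -1) * N i.1 y))) ∨ True) ∧
      (⨅ c : Y → ℝ, ⨆ x : X, ∑ y, |N x y - c y|) ≤ M ∧
      ∀ ε > 0, ∃ t, (((0 : Y → ℝ), t) ∈
        convexHull ℝ (Set.range (fun i : X × (Y → Bool) =>
          (((fun y => if i.2 y then (1:ℝ) else -1) : Y → ℝ),
            ∑ y, (if i.2 y then (1:ℝ) else -1) * N i.1 y)))) ∧ M - ε < t := by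
  classical
  set σ : (Y → Bool) → Y → ℝ := fun s y => if s y then (1:ℝ) else -1 with hσ
  set F : X × (Y → Bool) → (Y → ℝ) × ℝ :=
    fun i => (σ i.2, ∑ y, σ i.2 y * N i.1 y) with hF
  set K := convexHull ℝ (Set.range F) with hK
  set tset := {t : ℝ | ((0 : Y → ℝ), t) ∈ K} with htset
  have hKconv : Convex ℝ K := convex_convexHull ℝ _
  have hKcl : IsClosed K := ((Set.finite_range F).isCompact_convexHull ℝ).isClosed
  -- (0,0) ∈ K
  have h00 : (((0 : Y → ℝ), (0:ℝ))) ∈ K := by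
    obtain ⟨x₀⟩ := (inferInstance : Nonempty X)
    have h1 : F (x₀, fun _ => true) ∈ K := subset_convexHull ℝ _ ⟨(x₀, fun _ => true), rfl⟩
    have h2 : F (x₀, fun _ => false) ∈ K := subset_convexHull ℝ _ ⟨(x₀, fun _ => false), rfl⟩
    have := hKconv h1 h2 (by norm_num : (0:ℝ) ≤ 1/2) (by norm_num : (0:ℝ) ≤ 1/2) (by norm_num)
    convert this using 1
    have e1 : F (x₀, fun _ => true) = ((fun _ => (1:ℝ)), 1) := by
      refine Prod.ext ?_ ?_
      · funext y; simp [hF, hσ]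
      · simp [hF, hσ, hN1 x₀]
    have e2 : F (x₀, fun _ => false) = ((fun _ => (-1:ℝ)), -1) := by
      refine Prod.ext ?_ ?_
      · funext y; simp [hF, hσ]
      · simp only [hF, hσ]
        simp only [if_neg (by simp : ¬(false = true))]
        rw [show ∑ y, (-1 : ℝ) * N x₀ y = -∑ y, N x₀ y by rw [← Finset.sum_neg_distrib]; exact Finset.sum_congr rfl fun y _ => by ring]
        simp [hN1 x₀]
    rw [e1, e2]
    refine Prod.ext ?_ ?_
    · funext y
      simp only [Prod.fst_add, Prod.smul_fst, Pi.add_apply, Pi.smul_apply, smul_eq_mul]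
      norm_num
    · simp only [Prod.snd_add, Prod.smul_snd, smul_eq_mul]
      norm_num
  have htne : tset.Nonempty := ⟨0, h00⟩
  have htbdd : BddAbove tset := by
    refine ⟨1, fun t ht => ?_⟩
    have hsub : K ⊆ {p : (Y → ℝ) × ℝ | p.2 ≤ 1} := by
      refine convexHull_min ?_ (convex_halfSpace_le ⟨fun a b => rfl, fun c a => rfl⟩ 1)
      rintro _ ⟨i, rfl⟩
      simp only [hF, Set.mem_setOf_eq]
      calc ∑ y, σ i.2 y * N i.1 y ≤ ∑ y, N i.1 y := by
            refine Finset.sum_le_sum fun y _ => ?_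
            have : σ i.2 y ≤ 1 := by by_cases hb : i.2 y <;> simp [hσ, hb]
            nlinarith [hN0 i.1 y]
        _ = 1 := hN1 i.1
    exact hsub ht
  set M := sSup tset with hM
  refine ⟨M, Or.inr trivial, ?_, ?_⟩
  · -- radius ≤ M
    have hblow : BddBelow (Set.range fun c : Y → ℝ => ⨆ x : X, ∑ y, |N x y - c y|) := by
      refine ⟨0, ?_⟩
      rintro _ ⟨c, rfl⟩
      obtain ⟨x₀⟩ := (inferInstance : Nonempty X)
      exact le_trans (Finset.sum_nonneg fun y _ => abs_nonneg _)
        (le_ciSup (f := fun x : X => ∑ y, |N x y - c y|)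
          (Set.Finite.bddAbove (Set.finite_range _)) x₀)
    refine le_of_forall_pos_le_add fun δ hδ => ?_
    have hz : (((0 : Y → ℝ), M + δ)) ∉ K := by
      intro hmem
      have : M + δ ≤ M := le_csSup htbdd hmem
      linarith
    obtain ⟨f, u, hfK, hfz⟩ := geometric_hahn_banach_closed_point hKconv hKcl hz
    set γ := f ((0 : Y → ℝ), (1:ℝ)) with hγdef
    set c' : Y → ℝ := fun y => f ((fun j => if j = y then (1:ℝ) else 0), 0) with hc'
    have hlin : ∀ (v : Y → ℝ) (s : ℝ), f (v, s) = (∑ y, v y * c' y) + s * γ := by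
      intro v s
      have hv : ((v, s) : (Y → ℝ) × ℝ) =
          (∑ y, v y • (((fun j => if j = y then (1:ℝ) else 0) : Y → ℝ), (0:ℝ)))
            + s • (((0 : Y → ℝ), (1:ℝ))) := by
        refine Prod.ext ?_ ?_
        · funext j
          simp only [Prod.fst_sum, Prod.smul_fst, Prod.fst_add, Pi.add_apply,
            Finset.sum_apply, Pi.smul_apply, smul_eq_mul, Prod.smul_snd, mul_ite, mul_one,
            mul_zero]
          rw [_root_.Finset.sum_ite_eq]
          simp
        · simp [Prod.snd_sum]
      rw [hv, map_add, map_sum, _root_.map_smul]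
      simp only [_root_.map_smul, smul_eq_mul]
      rfl
    obtain ⟨t₀, ht₀K, ht₀⟩ := exists_lt_of_lt_csSup htne (show M - δ < M by linarith)
    have h1 : f ((0 : Y → ℝ), t₀) < u := hfK _ ht₀K
    have h2 : u < f ((0 : Y → ℝ), M + δ) := hfz
    have e1 : f ((0 : Y → ℝ), t₀) = t₀ * γ := by
      rw [hlin]; simp
    have e2 : f ((0 : Y → ℝ), M + δ) = (M + δ) * γ := by
      rw [hlin]; simp
    have hγpos : 0 < γ := by
      have ht₀M : t₀ ≤ M := le_csSup htbdd ht₀K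
      rw [e1] at h1; rw [e2] at h2
      by_contra hcon
      push_neg at hcon
      nlinarith [mul_nonpos_of_nonneg_of_nonpos
        (show (0:ℝ) ≤ M + δ - t₀ by linarith) hcon]
    set c : Y → ℝ := fun y => -(c' y) / γ with hcdef
    have hxb : ∀ x : X, ∑ y, |N x y - c y| ≤ M + δ := by
      intro x
      set s : Y → Bool := fun y => decide (0 ≤ N x y - c y) with hs
      have hgen : f (F (x, s)) < u := hfK _ (subset_convexHull ℝ _ ⟨(x, s), rfl⟩)
      have hflt : (∑ y, σ s y * c' y) + (∑ y, σ s y * N x y) * γ < (M + δ) * γ := by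
        have := hlin (σ s) (∑ y, σ s y * N x y)
        rw [hF] at hgen
        simp only at hgen
        rw [this] at hgen
        rw [e2] at h2
        linarith
      have habs : ∀ y, |N x y - c y| = σ s y * N x y + (σ s y * c' y) / γ := by
        intro y
        have hcy : c y = -(c' y) / γ := rfl
        by_cases hy : 0 ≤ N x y - c y
        · have hsy : s y = true := by
            simp only [hs, decide_eq_true_eq]
            exact hy
          have hσy : σ s y = 1 := by simp [hσ, hsy]
          rw [abs_of_nonneg hy, hσy, hcy]
          ring
        · have hsy : s y = false := by
            simp only [hs, decide_eq_false_iff_not]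
            exact hy
          have hσy : σ s y = -1 := by simp [hσ, hsy]
          rw [abs_of_neg (lt_of_not_ge hy), hσy, hcy]
          ring
      calc ∑ y, |N x y - c y| = ∑ y, (σ s y * N x y + (σ s y * c' y) / γ) :=
            Finset.sum_congr rfl fun y _ => habs y
        _ = (∑ y, σ s y * N x y) + (∑ y, σ s y * c' y) / γ := by
            rw [Finset.sum_add_distrib, Finset.sum_div]
        _ ≤ M + δ := by
            have h3 : (∑ y, σ s y * c' y) / γ < M + δ - ∑ y, σ s y * N x y := by
              rw [div_lt_iff₀ hγpos]
              nlinarith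
            linarith
    calc (⨅ c : Y → ℝ, ⨆ x : X, ∑ y, |N x y - c y|)
        ≤ ⨆ x : X, ∑ y, |N x y - c y| := ciInf_le hblow c
      _ ≤ M + δ := ciSup_le hxb
  · intro ε hε
    obtain ⟨t, htK, ht⟩ := exists_lt_of_lt_csSup htne (show M - ε < M by linarith)
    exact ⟨t, htK, ht⟩


theorem exists_correlation {X Y : Type*} [Fintype X] [Fintype Y] [DecidableEq Y]
    [Nonempty X] [Nonempty Y] (N : X → Y → ℝ) (hN1 : ∀ x, ∑ y, N x y = 1)
    (w : X × (Y → Bool) → ℝ) (hw0 : ∀ i, 0 ≤ w i) (hw1 : ∑ i, w i = 1)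
    (hzero : ∀ y, ∑ i, w i * (if i.2 y then (1:ℝ) else -1) = 0) (t : ℝ)
    (ht : ∑ i, w i * (∑ y, (if i.2 y then (1:ℝ) else -1) * N i.1 y) = t) :
    ∃ (nR nS nP nQ : ℕ) (D : Fin (nR + 1) → Fin (nS + 1) → Fin nP → Fin nQ → ℝ),
      IsCorrelation D ∧ NonSignaling D ∧ (1 + t) / 2 ≤ SuccD N D := by
  classical
  have hhalf : ∀ (y : Y) (b : Bool), ∑ i : (X × (Y → Bool)), w i * (if i.2 y = b then (1:ℝ) else 0) = 1/2 := by
    intro y b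
    have h1 : (∑ i : (X × (Y → Bool)), w i * (if i.2 y = true then (1:ℝ) else 0)) +
        (∑ i : (X × (Y → Bool)), w i * (if i.2 y = false then (1:ℝ) else 0)) = 1 := by
      rw [← Finset.sum_add_distrib]
      refine Eq.trans (Finset.sum_congr rfl fun i _ => ?_) hw1
      cases h : i.2 y <;> simp [h]
    have h2 : (∑ i : (X × (Y → Bool)), w i * (if i.2 y = true then (1:ℝ) else 0)) -
        (∑ i : (X × (Y → Bool)), w i * (if i.2 y = false then (1:ℝ) else 0)) = 0 := by
      rw [← Finset.sum_sub_distrib]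
      refine Eq.trans (Finset.sum_congr rfl fun i _ => ?_) (hzero y)
      cases h : i.2 y <;> simp [h]
    cases b
    · linarith
    · linarith
  -- the equivalences
  have hcardY : Fintype.card Y - 1 + 1 = Fintype.card Y :=
    Nat.succ_pred_eq_of_pos Fintype.card_pos
  set eY : Fin (Fintype.card Y - 1 + 1) ≃ Y :=
    (finCongr hcardY).trans (Fintype.equivFin Y).symm with heY
  set eP : Fin (Fintype.card (X × (Y → Bool))) ≃ (X × (Y → Bool)) := (Fintype.equivFin (X × (Y → Bool))).symm with heP
  set eB : Fin 2 ≃ Bool := finTwoEquiv with heB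
  set d : Bool → Y → (X × (Y → Bool)) → Bool → ℝ :=
    fun a y i b => w i * (if i.2 y = (b == a) then 1 else 0) with hd
  refine ⟨1, Fintype.card Y - 1, Fintype.card (X × (Y → Bool)), 2,
    fun rr ss pp qq => d (eB rr) (eY ss) (eP pp) (eB qq), ?_, ?_, ?_⟩
  · constructor
    · intro r s p q
      exact mul_nonneg (hw0 _) (by positivity)
    · intro rr ss
      have hcol : ∀ pp, ∑ qq : Fin 2, d (eB rr) (eY ss) (eP pp) (eB qq) = w (eP pp) := by
        intro pp
        rw [Fin.sum_univ_two]
        cases hr : eB rr <;> cases h : (eP pp).2 (eY ss) <;>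
          simp [hd, hr, h, heB, finTwoEquiv]
      rw [Finset.sum_congr rfl fun pp _ => hcol pp, Equiv.sum_comp eP w, hw1]
  · constructor
    · intro rr pp ss ss'
      have hcol : ∀ (rr' : Fin (1+1)) (s : Y), ∑ qq : Fin 2, d (eB rr') s (eP pp) (eB qq) = w (eP pp) := by
        intro rr' s
        rw [Fin.sum_univ_two]
        cases hr : eB rr' <;> cases h : (eP pp).2 s <;>
          simp [hd, hr, h, heB, finTwoEquiv]
      rw [hcol rr, hcol rr]
    · intro ss qq rr rr'
      have hrow : ∀ (a : Bool), ∑ pp : Fin (Fintype.card (X × (Y → Bool))),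
          d a (eY ss) (eP pp) (eB qq) = 1/2 := by
        intro a
        rw [Equiv.sum_comp eP (fun i => d a (eY ss) i (eB qq))]
        exact hhalf (eY ss) ((eB qq) == a)
      rw [hrow, hrow]
  · -- value bound
    set D' : Fin (1+1) → Fin (Fintype.card Y - 1 + 1) → Fin (Fintype.card (X × (Y → Bool))) → Fin 2 → ℝ :=
      fun rr ss pp qq => d (eB rr) (eY ss) (eP pp) (eB qq) with hD'
    set π₀ : (Bool → Fin (1+1)) × (Bool → Fin (Fintype.card (X × (Y → Bool))) → X) ×
        (Y → Fin (Fintype.card Y - 1 + 1)) × (Y → Fin 2 → Bool) :=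
      (fun a => eB.symm a, fun _ pp => (eP pp).1, fun y => eY.symm y, fun _ qq => eB qq) with hπ₀
    have hle : (1 / 2 : ℝ) * ∑ a : Bool, ∑ pp, ∑ y, ∑ qq,
        D' (π₀.1 a) (π₀.2.2.1 y) pp qq * N (π₀.2.1 a pp) y *
          (if π₀.2.2.2 y qq = a then 1 else 0) ≤ SuccD N D' :=
      le_ciSup (f := fun π : (Bool → Fin (1+1)) × (Bool → Fin (Fintype.card (X × (Y → Bool))) → X) ×
        (Y → Fin (Fintype.card Y - 1 + 1)) × (Y → Fin 2 → Bool) =>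
        (1 / 2 : ℝ) * ∑ a : Bool, ∑ pp, ∑ y, ∑ qq,
          D' (π.1 a) (π.2.2.1 y) pp qq * N (π.2.1 a pp) y *
            (if π.2.2.2 y qq = a then 1 else 0))
        (Set.Finite.bddAbove (Set.finite_range _)) π₀
    refine le_trans (le_of_eq ?_) hle
    -- compute the value of π₀
    have hval : ∀ a : Bool, ∑ pp, ∑ y, ∑ qq,
        D' (π₀.1 a) (π₀.2.2.1 y) pp qq * N (π₀.2.1 a pp) y *
          (if π₀.2.2.2 y qq = a then 1 else 0)
        = ∑ i : (X × (Y → Bool)), ∑ y, w i * (if i.2 y = true then (1:ℝ) else 0) * N i.1 y := by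
      intro a
      rw [← Equiv.sum_comp eP (fun i : (X × (Y → Bool)) => ∑ y, w i * (if i.2 y = true then (1:ℝ) else 0) * N i.1 y)]
      refine Finset.sum_congr rfl fun pp _ => ?_
      refine Finset.sum_congr rfl fun y _ => ?_
      have : ∑ qq : Fin 2, D' (π₀.1 a) (π₀.2.2.1 y) pp qq * N (π₀.2.1 a pp) y *
          (if π₀.2.2.2 y qq = a then 1 else 0)
          = ∑ b : Bool, d a y (eP pp) b * N ((eP pp).1) y * (if b = a then 1 else 0) := by
        rw [← Equiv.sum_comp eB (fun b : Bool => d a y (eP pp) b * N ((eP pp).1) y *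
          (if b = a then 1 else 0))]
        refine Finset.sum_congr rfl fun qq _ => ?_
        simp only [hD', hπ₀, Equiv.apply_symm_apply]
      rw [this]
      rw [Fintype.sum_bool]
      cases a <;> simp [hd]
    rw [Fintype.sum_bool, hval true, hval false]
    have hfin : ∑ i : (X × (Y → Bool)), ∑ y, w i * (if i.2 y = true then (1:ℝ) else 0) * N i.1 y = (1 + t)/2 := by
      have h1 : ∑ i : (X × (Y → Bool)), ∑ y, w i * N i.1 y = 1 := by
        have : ∀ i : (X × (Y → Bool)), ∑ y, w i * N i.1 y = w i := by
          intro i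
          rw [← Finset.mul_sum, hN1, mul_one]
        rw [Finset.sum_congr rfl fun i _ => this i, hw1]
      have h2 : ∑ i : (X × (Y → Bool)), ∑ y, w i * ((if i.2 y then (1:ℝ) else -1) * N i.1 y) = t := by
        rw [← ht]
        exact Finset.sum_congr rfl fun i _ => (Finset.mul_sum _ _ _).symm
      have h3 : ∀ (i : (X × (Y → Bool))) (y : Y), w i * (if i.2 y = true then (1:ℝ) else 0) * N i.1 y
          = (w i * N i.1 y + w i * ((if i.2 y then (1:ℝ) else -1) * N i.1 y)) / 2 := by
        intro i y
        cases h : i.2 y <;> simp [h] <;> ring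
      calc ∑ i : (X × (Y → Bool)), ∑ y, w i * (if i.2 y = true then (1:ℝ) else 0) * N i.1 y
          = ∑ i : (X × (Y → Bool)), ∑ y, (w i * N i.1 y + w i * ((if i.2 y then (1:ℝ) else -1) * N i.1 y)) / 2 :=
            Finset.sum_congr rfl fun i _ => Finset.sum_congr rfl fun y _ => h3 i y
        _ = ((∑ i : (X × (Y → Bool)), ∑ y, w i * N i.1 y) +
              ∑ i : (X × (Y → Bool)), ∑ y, w i * ((if i.2 y then (1:ℝ) else -1) * N i.1 y)) / 2 := by
            have inner : ∀ i : (X × (Y → Bool)), ∑ y, (w i * N i.1 y +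
                w i * ((if i.2 y then (1:ℝ) else -1) * N i.1 y)) / 2
                = ((∑ y, w i * N i.1 y) +
                    ∑ y, w i * ((if i.2 y then (1:ℝ) else -1) * N i.1 y)) / 2 := by
              intro i
              rw [← Finset.sum_div, Finset.sum_add_distrib]
            refine Eq.trans (Finset.sum_congr rfl fun i _ => inner i) ?_
            rw [← Finset.sum_div, Finset.sum_add_distrib]
        _ = (1 + t) / 2 := by rw [h1, h2]
    rw [hfin]
    ring


/-- **Proposition 4.** The non-signaling assisted one-shot success probability
equals `1/2 + (1/2) · Rad₁ { n_x : x ∈ X }`, where `Rad₁` is the radius in the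
`ℓ¹` norm of the set of output distributions of `N`. -/
theorem succNS_eq_radius {X Y : Type*} [Fintype X] [Fintype Y] [DecidableEq Y]
    [Nonempty X] [Nonempty Y]
    (N : X → Y → ℝ) (hN : IsChannel N) :
    SuccNS N = 1 / 2 + (1 / 2) * ⨅ c : Y → ℝ, ⨆ x : X, ∑ y, |N x y - c y| := by
  classical
  obtain ⟨hN0, hN1⟩ := hN
  set r := ⨅ c : Y → ℝ, ⨆ x : X, ∑ y, |N x y - c y| with hr
  set SS := { v : ℝ | ∃ (nR nS nP nQ : ℕ)
    (D : Fin (nR + 1) → Fin (nS + 1) → Fin nP → Fin nQ → ℝ),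
    IsCorrelation D ∧ NonSignaling D ∧ v = SuccD N D } with hSS
  have hub : ∀ v ∈ SS, v ≤ 1 / 2 + 1 / 2 * r := by
    rintro v ⟨nR, nS, nP, nQ, D, hD, hNS, rfl⟩
    have h1 : ∀ c : Y → ℝ, SuccD N D ≤ 1 / 2 + (1 / 2) * ⨆ x : X, ∑ y, |N x y - c y| :=
      fun c => succD_le_center N ⟨hN0, hN1⟩ D hD hNS c
    have h2 : (SuccD N D - 1 / 2) * 2 ≤ r :=
      le_ciInf fun c => by linarith [h1 c]
    linarith
  have hlb : ∀ ε : ℝ, 0 < ε → ∃ v ∈ SS, 1 / 2 + 1 / 2 * r - ε ≤ v := by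
    intro ε hε
    obtain ⟨M, -, hrM, hM⟩ := radius_le_dual N hN0 hN1
    obtain ⟨t, htK, ht⟩ := hM ε hε
    -- extract convex weights
    rw [convexHull_range_eq_exists_affineCombination] at htK
    obtain ⟨fs, w, hw0, hw1, haff⟩ := htK
    set F : X × (Y → Bool) → (Y → ℝ) × ℝ := fun i =>
      (((fun y => if i.2 y then (1:ℝ) else -1) : Y → ℝ),
        ∑ y, (if i.2 y then (1:ℝ) else -1) * N i.1 y) with hF
    set w' : X × (Y → Bool) → ℝ := fun i => if i ∈ fs then w i else 0 with hw'
    have hw'0 : ∀ i, 0 ≤ w' i := by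
      intro i
      by_cases h : i ∈ fs <;> simp [hw', h]
      exact hw0 i h
    have hw'1 : ∑ i, w' i = 1 := by
      rw [hw']
      simp only [Finset.sum_ite_mem, Finset.univ_inter]
      exact hw1
    have hvec : ∑ i, w' i • F i = (((0 : Y → ℝ), t) : (Y → ℝ) × ℝ) := by
      have e : ∀ i : X × (Y → Bool), w' i • F i = if i ∈ fs then w i • F i else 0 := by
        intro i
        by_cases h : i ∈ fs <;> simp [hw', h]
      rw [Finset.sum_congr rfl fun i _ => e i, Finset.sum_ite_mem, Finset.univ_inter,
        ← Finset.affineCombination_eq_linear_combination fs F w hw1, haff]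
    have hzero : ∀ y, ∑ i, w' i * (if i.2 y then (1:ℝ) else -1) = 0 := by
      intro y
      have h1 := congrFun (congrArg Prod.fst hvec) y
      simpa [Prod.fst_sum, Finset.sum_apply, hF] using h1
    have hsnd : ∑ i, w' i * (∑ y, (if i.2 y then (1:ℝ) else -1) * N i.1 y) = t := by
      have h2 := congrArg Prod.snd hvec
      simpa [Prod.snd_sum, hF] using h2
    obtain ⟨nR, nS, nP, nQ, D, hD, hNS, hDval⟩ :=
      exists_correlation N hN1 w' hw'0 hw'1 hzero t hsnd
    refine ⟨SuccD N D, ⟨nR, nS, nP, nQ, D, hD, hNS, rfl⟩, ?_⟩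
    have : 1 / 2 + 1 / 2 * r - ε ≤ (1 + t) / 2 := by
      have : r - ε < t := by linarith
      linarith
    linarith
  have hbdd : BddAbove SS := ⟨1 / 2 + 1 / 2 * r, fun v hv => hub v hv⟩
  have hne : SS.Nonempty := by
    obtain ⟨v, hv, -⟩ := hlb 1 one_pos
    exact ⟨v, hv⟩
  have hgoal : SuccNS N = sSup SS := rfl
  rw [hgoal]
  refine le_antisymm (csSup_le hne hub) ?_
  refine le_of_forall_pos_le_add fun ε hε => ?_
  obtain ⟨v, hv, hvge⟩ := hlb ε hε
  have := le_csSup hbdd hv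
  linarith


end
end

section
/- Let N be a classical channel with finite input alphabet X of size r and finite output alphabet Y. Then Succ_NS(N) − 1/2 ≤ (2 − 2/r)·(Succ(N) − 1/2). -/
open scoped Matrix Kronecker BigOperators Matrix.Norms.L2Operator ComplexOrder
open Matrix Finset

noncomputable section

section Theorem5Aux

variable {X Y : Type*} [Fintype X] [Fintype Y] [Nonempty X]

private lemma succ_bdd (N : X → Y → ℝ) (hN : IsChannel N) :
    BddAbove (Set.range fun z : X × X × (Y → Bool) =>
      (1 / 2) * (∑ y, if z.2.2 y = false then N z.1 y else 0) +
        (1 / 2) * (∑ y, if z.2.2 y = true then N z.2.1 y else 0)) := by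
  refine ⟨1, ?_⟩
  rintro v ⟨z, rfl⟩
  have h1 : (∑ y, if z.2.2 y = false then N z.1 y else 0) ≤ 1 := by
    calc (∑ y, if z.2.2 y = false then N z.1 y else 0) ≤ ∑ y, N z.1 y := by
          apply Finset.sum_le_sum; intro y _
          by_cases hy : z.2.2 y = false <;> simp [hy, hN.1]
      _ = 1 := hN.2 _
  have h2 : (∑ y, if z.2.2 y = true then N z.2.1 y else 0) ≤ 1 := by
    calc (∑ y, if z.2.2 y = true then N z.2.1 y else 0) ≤ ∑ y, N z.2.1 y := by
          apply Finset.sum_le_sum; intro y _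
          by_cases hy : z.2.2 y = true <;> simp [hy, hN.1]
      _ = 1 := hN.2 _
  linarith

private lemma half_le_succ (N : X → Y → ℝ) (hN : IsChannel N) : 1 / 2 ≤ Succ N := by
  obtain ⟨x⟩ := ‹Nonempty X›
  have hle := le_ciSup (succ_bdd N hN) (⟨x, x, fun _ => false⟩ : X × X × (Y → Bool))
  simpa [Succ, hN.2 x] using hle

private lemma tv_le (N : X → Y → ℝ) (hN : IsChannel N) (x xb : X) :
    ∑ y, max (N x y - N xb y) 0 ≤ 2 * Succ N - 1 := by
  classical
  set gfun : Y → Bool := fun y => decide (N xb y < N x y) with hg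
  have hle := le_ciSup (succ_bdd N hN) (⟨xb, x, gfun⟩ : X × X × (Y → Bool))
  have hle' : (1 / 2) * (∑ y, if gfun y = false then N xb y else 0) +
      (1 / 2) * (∑ y, if gfun y = true then N x y else 0) ≤ Succ N := hle
  have point : ∀ y, (if gfun y = false then N xb y else 0) +
      (if gfun y = true then N x y else 0)
      = N xb y + max (N x y - N xb y) 0 := by
    intro y
    by_cases hlt : N xb y < N x y
    · have h1 : gfun y = true := by simp [hg, hlt]
      have h2 : max (N x y - N xb y) 0 = N x y - N xb y := max_eq_left (by linarith)
      rw [h1, h2]; norm_num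
    · have h1 : gfun y = false := by simp [hg, hlt]
      have h2 : max (N x y - N xb y) 0 = 0 := max_eq_right (by linarith [not_lt.mp hlt])
      rw [h1, h2]; norm_num
  have hsum : (∑ y, if gfun y = false then N xb y else 0) +
      (∑ y, if gfun y = true then N x y else 0)
      = 1 + ∑ y, max (N x y - N xb y) 0 := by
    rw [← Finset.sum_add_distrib]
    rw [Finset.sum_congr rfl fun y _ => point y]
    rw [Finset.sum_add_distrib, hN.2 xb]
  linarith

private lemma succD_le {R S P Q : Type*} [Fintype R] [Fintype S]
    [Fintype P] [Fintype Q] [DecidableEq P] [DecidableEq Q] [DecidableEq Y]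
    [Nonempty R] [Nonempty S]
    (N : X → Y → ℝ) (hN : IsChannel N) (D : R → S → P → Q → ℝ)
    (hD : IsCorrelation D) (hNS : NonSignaling D) :
    SuccD N D ≤ 1 / 2 + (2 - 2 / (Fintype.card X : ℝ)) * (Succ N - 1 / 2) := by
  classical
  obtain ⟨s₀⟩ := ‹Nonempty S›
  have hcard : (1 : ℝ) ≤ (Fintype.card X : ℝ) := by
    exact_mod_cast Fintype.card_pos
  have hδ0 : 0 ≤ 2 * Succ N - 1 := by have := half_le_succ N hN; linarith
  apply ciSup_le
  rintro ⟨e, f, g, hf⟩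
  dsimp only
  set μ : Bool → P → ℝ := fun a p => ∑ q, D (e a) s₀ p q with hμdef
  set c : Bool → Y → P → ℝ :=
    fun a y p => ∑ q, D (e a) (g y) p q * (if hf y q = a then 1 else 0) with hcdef
  set ρ : Bool → X → ℝ := fun a x => ∑ p, if f a p = x then μ a p else 0 with hρdef
  set d : Bool → Y → X → ℝ := fun a y x => ∑ p, if f a p = x then c a y p else 0 with hddef
  have hμ0 : ∀ a p, 0 ≤ μ a p := fun a p => Finset.sum_nonneg fun q _ => hD.1 _ _ _ _
  have hc0 : ∀ a y p, 0 ≤ c a y p := fun a y p => Finset.sum_nonneg fun q _ =>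
    mul_nonneg (hD.1 _ _ _ _) (by split <;> norm_num)
  have hcμ : ∀ a y p, c a y p ≤ μ a p := by
    intro a y p
    have h1 : c a y p ≤ ∑ q, D (e a) (g y) p q := by
      apply Finset.sum_le_sum
      intro q _
      by_cases hq : hf y q = a
      · simp [hq]
      · simp [hq, hD.1 (e a) (g y) p q]
    calc c a y p ≤ ∑ q, D (e a) (g y) p q := h1
      _ = μ a p := hNS.1 (e a) p (g y) s₀
  have hρ0 : ∀ a x, 0 ≤ ρ a x := fun a x => Finset.sum_nonneg fun p _ => by
    by_cases hp : f a p = x <;> simp [hp, hμ0 a p]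
  have hd0 : ∀ a y x, 0 ≤ d a y x := fun a y x => Finset.sum_nonneg fun p _ => by
    by_cases hp : f a p = x <;> simp [hp, hc0 a y p]
  have hdρ : ∀ a y x, d a y x ≤ ρ a x := fun a y x => Finset.sum_le_sum fun p _ => by
    by_cases hp : f a p = x <;> simp [hp, hcμ a y p]
  have hρsum : ∀ a, ∑ x, ρ a x = 1 := by
    intro a
    have : ∑ x, ρ a x = ∑ p, μ a p := by
      rw [hρdef, Finset.sum_comm]
      exact Finset.sum_congr rfl fun p _ => by simp [Finset.sum_ite_eq]
    rw [this, hμdef]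
    exact hD.2 (e a) s₀
  have hdsumx : ∀ a y, ∑ x, d a y x = ∑ p, c a y p := by
    intro a y
    rw [hddef, Finset.sum_comm]
    exact Finset.sum_congr rfl fun p _ => by simp [Finset.sum_ite_eq]
  have hcsum : ∀ y, (∑ p, c true y p) + (∑ p, c false y p) = 1 := by
    intro y
    have hps : ∀ a, ∑ p, c a y p
        = ∑ q, (∑ p, D (e a) (g y) p q) * (if hf y q = a then 1 else 0) := by
      intro a
      rw [hcdef, Finset.sum_comm]
      exact Finset.sum_congr rfl fun q _ => (Finset.sum_mul _ _ _).symm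
    rw [hps true, hps false]
    have hw : ∀ q, ∑ p, D (e false) (g y) p q = ∑ p, D (e true) (g y) p q :=
      fun q => hNS.2 (g y) q (e false) (e true)
    have key : (∑ q, (∑ p, D (e true) (g y) p q) * (if hf y q = true then 1 else 0)) +
        (∑ q, (∑ p, D (e false) (g y) p q) * (if hf y q = false then 1 else 0))
        = ∑ q, ∑ p, D (e true) (g y) p q := by
      rw [← Finset.sum_add_distrib]
      apply Finset.sum_congr rfl
      intro q _
      rw [hw q]
      cases hq : hf y q <;> simp [hq]
    rw [key, Finset.sum_comm]
    exact hD.2 (e true) (g y)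
  have hobj : ∀ a, (∑ p, ∑ y, ∑ q,
        D (e a) (g y) p q * N (f a p) y * (if hf y q = a then 1 else 0))
      = ∑ y, ∑ x, d a y x * N x y := by
    intro a
    rw [Finset.sum_comm]
    apply Finset.sum_congr rfl
    intro y _
    have h1 : ∀ p, (∑ q, D (e a) (g y) p q * N (f a p) y * (if hf y q = a then 1 else 0))
        = c a y p * N (f a p) y := by
      intro p
      rw [hcdef, Finset.sum_mul]
      exact Finset.sum_congr rfl fun q _ => by ring
    rw [Finset.sum_congr rfl fun p _ => h1 p]
    calc ∑ p, c a y p * N (f a p) y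
        = ∑ p, ∑ x, (if f a p = x then c a y p * N x y else 0) := by
          apply Finset.sum_congr rfl; intro p _
          simp [Finset.sum_ite_eq]
      _ = ∑ x, ∑ p, (if f a p = x then c a y p * N x y else 0) := Finset.sum_comm
      _ = ∑ x, d a y x * N x y := by
          apply Finset.sum_congr rfl; intro x _
          rw [hddef, Finset.sum_mul]
          apply Finset.sum_congr rfl; intro p _
          by_cases hp : f a p = x <;> simp [hp]
  -- choose the heaviest input
  have hx : ∃ xb : X, 2 / (Fintype.card X : ℝ) ≤ ρ false xb + ρ true xb := by
    by_contra hcon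
    push_neg at hcon
    have hlt : ∑ x, (ρ false x + ρ true x) < ∑ _x : X, 2 / (Fintype.card X : ℝ) :=
      Finset.sum_lt_sum_of_nonempty Finset.univ_nonempty fun x _ => hcon x
    rw [Finset.sum_add_distrib, hρsum false, hρsum true, Finset.sum_const,
      Finset.card_univ, nsmul_eq_mul] at hlt
    have hne : (Fintype.card X : ℝ) ≠ 0 := by linarith
    rw [mul_div_cancel₀ _ hne] at hlt
    linarith
  obtain ⟨xb, hxb⟩ := hx
  set T : X → ℝ := fun x => ∑ y, max (N x y - N xb y) 0 with hTdef
  have hT : ∀ x, T x ≤ 2 * Succ N - 1 := fun x => tv_le N hN x xb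
  have hTxb : T xb = 0 := by simp [hTdef]
  have hC : ∀ a, ∑ x, ρ a x * T x ≤ (1 - ρ a xb) * (2 * Succ N - 1) := by
    intro a
    have hsplit : ∑ x, ρ a x * T x
        = ρ a xb * T xb + ∑ x ∈ Finset.univ.erase xb, ρ a x * T x :=
      (Finset.add_sum_erase _ _ (Finset.mem_univ xb)).symm
    rw [hsplit, hTxb, mul_zero, zero_add]
    calc ∑ x ∈ Finset.univ.erase xb, ρ a x * T x
        ≤ ∑ x ∈ Finset.univ.erase xb, ρ a x * (2 * Succ N - 1) := by
          apply Finset.sum_le_sum; intro x _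
          exact mul_le_mul_of_nonneg_left (hT x) (hρ0 a x)
      _ = (∑ x ∈ Finset.univ.erase xb, ρ a x) * (2 * Succ N - 1) :=
          (Finset.sum_mul _ _ _).symm
      _ = (1 - ρ a xb) * (2 * Succ N - 1) := by
          rw [Finset.sum_erase_eq_sub (Finset.mem_univ xb), hρsum a]
  -- per-output bound
  have stepA : ∀ y, (∑ x, d true y x * N x y) + (∑ x, d false y x * N x y)
      ≤ N xb y + ((∑ x, ρ true x * max (N x y - N xb y) 0)
        + (∑ x, ρ false x * max (N x y - N xb y) 0)) := by
    intro y
    have e1 : ∀ a, ∑ x, d a y x * N x y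
        = (∑ x, d a y x * (N x y - N xb y)) + (∑ x, d a y x) * N xb y := by
      intro a
      rw [Finset.sum_mul, ← Finset.sum_add_distrib]
      exact Finset.sum_congr rfl fun x _ => by ring
    have e2 : ∀ a, (∑ x, d a y x * (N x y - N xb y))
        ≤ ∑ x, ρ a x * max (N x y - N xb y) 0 := by
      intro a
      apply Finset.sum_le_sum; intro x _
      calc d a y x * (N x y - N xb y) ≤ d a y x * max (N x y - N xb y) 0 :=
            mul_le_mul_of_nonneg_left (le_max_left _ _) (hd0 a y x)
        _ ≤ ρ a x * max (N x y - N xb y) 0 :=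
            mul_le_mul_of_nonneg_right (hdρ a y x) (le_max_right _ _)
    have e3 : (∑ x, d true y x) + (∑ x, d false y x) = 1 := by
      rw [hdsumx, hdsumx]; exact hcsum y
    have := e1 true
    have := e1 false
    have h2t := e2 true
    have h2f := e2 false
    nlinarith [e1 true, e1 false, e2 true, e2 false, e3,
      hN.1 xb y]
  calc (1 / 2) * ∑ a : Bool, ∑ p, ∑ y, ∑ q,
        D (e a) (g y) p q * N (f a p) y * (if hf y q = a then 1 else 0)
      = (1 / 2) * ∑ a : Bool, ∑ y, ∑ x, d a y x * N x y := by
        rw [Finset.sum_congr rfl fun a _ => hobj a]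
    _ = (1 / 2) * ∑ y, ((∑ x, d true y x * N x y) + (∑ x, d false y x * N x y)) := by
        rw [Fintype.sum_bool, ← Finset.sum_add_distrib]
    _ ≤ (1 / 2) * ∑ y, (N xb y + ((∑ x, ρ true x * max (N x y - N xb y) 0)
        + (∑ x, ρ false x * max (N x y - N xb y) 0))) := by
        have := Finset.sum_le_sum (fun y (_ : y ∈ Finset.univ) => stepA y)
        linarith
    _ = (1 / 2) * (1 + ((∑ x, ρ true x * T x) + (∑ x, ρ false x * T x))) := by
        rw [Finset.sum_add_distrib, hN.2 xb, Finset.sum_add_distrib]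
        have swap : ∀ a : Bool, ∑ y, ∑ x, ρ a x * max (N x y - N xb y) 0
            = ∑ x, ρ a x * T x := by
          intro a
          rw [Finset.sum_comm]
          exact Finset.sum_congr rfl fun x _ => (Finset.mul_sum _ _ _).symm
        rw [swap true, swap false]
    _ ≤ 1 / 2 + (2 - 2 / (Fintype.card X : ℝ)) * (Succ N - 1 / 2) := by
        have k1 := hC true
        have k2 := hC false
        have k3 : (2 / (Fintype.card X : ℝ)) * (2 * Succ N - 1)
            ≤ (ρ false xb + ρ true xb) * (2 * Succ N - 1) :=
          mul_le_mul_of_nonneg_right hxb hδ0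
        nlinarith [k1, k2, k3]

end Theorem5Aux

/-- **Theorem 5.** For a channel `N` with input alphabet of size `r`,
`Succ_NS(N) − 1/2 ≤ (2 − 2/r) (Succ(N) − 1/2)`. -/
theorem succNS_le_bound {X Y : Type*} [Fintype X] [Fintype Y] [DecidableEq Y]
    [Nonempty X]
    (N : X → Y → ℝ) (hN : IsChannel N) :
    SuccNS N - 1 / 2 ≤
      (2 - 2 / (Fintype.card X : ℝ)) * (Succ N - 1 / 2) := by
  have hcard : (1 : ℝ) ≤ (Fintype.card X : ℝ) := by exact_mod_cast Fintype.card_pos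
  have hfrac : 2 / (Fintype.card X : ℝ) ≤ 2 := by
    rw [div_le_iff₀ (by linarith)]; nlinarith
  have hs := half_le_succ N hN
  have hB : (0:ℝ) ≤ 1 / 2 + (2 - 2 / (Fintype.card X : ℝ)) * (Succ N - 1 / 2) := by
    have : (0:ℝ) ≤ (2 - 2 / (Fintype.card X : ℝ)) * (Succ N - 1 / 2) :=
      mul_nonneg (by linarith) (by linarith)
    linarith
  have hmain : SuccNS N ≤ 1 / 2 + (2 - 2 / (Fintype.card X : ℝ)) * (Succ N - 1 / 2) := by
    apply Real.sSup_le _ hB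
    rintro v ⟨nR, nS, nP, nQ, D, hD, hNS, rfl⟩
    exact succD_le N hN D hD hNS
  linarith

end
end

section
/- Let N be a classical channel with finite input alphabet X and finite output alphabet Y, and let D be a non-signaling correlation with input alphabets R, S and output alphabets P, Q, where m := |P| is the size of the output alphabet of Alice's part of the device. Then Succ(N, D) − 1/2 ≤ (2 − 1/m)·(Succ(N) − 1/2). -/
open scoped Matrix Kronecker BigOperators Matrix.Norms.L2Operator ComplexOrder
open Matrix Finset

noncomputable section

/-- **Theorem 6.** For any channel `N` and non-signaling correlation `D` whose
Alice-side output alphabet `P` has size `m`,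
`Succ(N, D) − 1/2 ≤ (2 − 1/m) (Succ(N) − 1/2)`. -/
theorem succD_le_bound {X Y R S P Q : Type*} [Fintype X] [Fintype Y] [Fintype R]
    [Fintype S] [Fintype P] [Fintype Q] [DecidableEq P] [DecidableEq Q]
    [DecidableEq Y] [Nonempty X] [Nonempty R] [Nonempty S]
    (N : X → Y → ℝ) (hN : IsChannel N)
    (D : R → S → P → Q → ℝ) (hD : IsCorrelation D) (hNS : NonSignaling D) :
    SuccD N D - 1 / 2 ≤
      (2 - 1 / (Fintype.card P : ℝ)) * (Succ N - 1 / 2) := by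
  obtain ⟨hNpos, hNsum⟩ := hN
  obtain ⟨hDpos, hDsum⟩ := hD
  obtain ⟨hNS1, hNS2⟩ := hNS
  -- card P is positive
  have hmpos : 0 < (Fintype.card P : ℝ) := by
    rcases Nat.eq_zero_or_pos (Fintype.card P) with h0 | hcp
    · exfalso
      have hP : IsEmpty P := Fintype.card_eq_zero_iff.mp h0
      have h1 := hDsum (Classical.arbitrary R) (Classical.arbitrary S)
      rw [Finset.univ_eq_empty, Finset.sum_empty] at h1
      norm_num at h1
    · exact_mod_cast hcp
  have hPne : Nonempty P := Fintype.card_pos_iff.mp (by exact_mod_cast hmpos)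
  -- bounded above data for Succ
  have hbdd : BddAbove (Set.range fun z : X × X × (Y → Bool) =>
      (1 / 2) * (∑ y, if z.2.2 y = false then N z.1 y else 0) +
        (1 / 2) * (∑ y, if z.2.2 y = true then N z.2.1 y else 0)) :=
    (Set.finite_range _).bddAbove
  have hhalf : (1 : ℝ) / 2 ≤ Succ N := by
    obtain ⟨x0⟩ := (inferInstance : Nonempty X)
    have h1 : _ ≤ Succ N := le_ciSup hbdd (x0, x0, fun _ => false)
    simpa [hNsum x0] using h1
  -- total variation bound
  have hpos : ∀ x x' : X, ∑ y, max (N x y - N x' y) 0 ≤ 2 * (Succ N - 1 / 2) := by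
    intro x x'
    have hle : _ ≤ Succ N := le_ciSup hbdd (x, x', fun y => decide (N x y < N x' y))
    have key : ∀ y : Y, (if (decide (N x y < N x' y)) = false then N x y else 0) +
        (if (decide (N x y < N x' y)) = true then N x' y else 0)
        = N x' y + max (N x y - N x' y) 0 := by
      intro y
      by_cases hcy : N x y < N x' y
      · simp [hcy, max_eq_right (by linarith : N x y - N x' y ≤ 0)]
      · simp [hcy, max_eq_left (by linarith [not_lt.mp hcy] : (0:ℝ) ≤ N x y - N x' y)]
    have hsum : (∑ y, if (decide (N x y < N x' y)) = false then N x y else 0) +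
        (∑ y, if (decide (N x y < N x' y)) = true then N x' y else 0)
        = 1 + ∑ y, max (N x y - N x' y) 0 := by
      rw [← Finset.sum_add_distrib, ← hNsum x', ← Finset.sum_add_distrib]
      exact Finset.sum_congr rfl fun y _ => key y
    simp only at hle
    linarith
  -- reduce to bounding each protocol
  have main : SuccD N D ≤ 1 / 2 + (2 - 1 / (Fintype.card P : ℝ)) * (Succ N - 1 / 2) := by
    refine ciSup_le ?_
    rintro ⟨e, f, gg, h⟩
    simp only
    set s₀ : S := Classical.arbitrary S with hs₀
    set c : Bool → P → Y → ℝ :=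
      fun a p y => ∑ q, D (e a) (gg y) p q * (if h y q = a then 1 else 0) with hc
    set α : Bool → P → ℝ := fun a p => ∑ q, D (e a) s₀ p q with hα
    have hc_nonneg : ∀ a p y, 0 ≤ c a p y := fun a p y =>
      Finset.sum_nonneg fun q _ => mul_nonneg (hDpos _ _ _ _) (by positivity)
    have hα_nonneg : ∀ a p, 0 ≤ α a p := fun a p =>
      Finset.sum_nonneg fun q _ => hDpos _ _ _ _
    have hc_le : ∀ a p y, c a p y ≤ α a p := by
      intro a p y
      calc c a p y ≤ ∑ q, D (e a) (gg y) p q := by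
            refine Finset.sum_le_sum fun q _ => ?_
            by_cases hq : h y q = a <;> simp [hq, hDpos]
        _ = α a p := hNS1 (e a) p (gg y) s₀
    have hα_sum : ∀ a, ∑ p, α a p = 1 := fun a => hDsum (e a) s₀
    have hcsum : ∀ y, ∑ a : Bool, ∑ p, c a p y = 1 := by
      intro y
      have hstep : ∀ a : Bool, ∑ p, c a p y
          = ∑ q, (∑ p, D (e false) (gg y) p q) * (if h y q = a then 1 else 0) := by
        intro a
        rw [hc]
        rw [Finset.sum_comm]
        refine Finset.sum_congr rfl fun q _ => ?_
        rw [← Finset.sum_mul, hNS2 (gg y) q (e a) (e false)]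
      rw [Fintype.sum_bool, hstep true, hstep false, ← Finset.sum_add_distrib]
      have hq1 : ∀ q : Q, (∑ p, D (e false) (gg y) p q) * (if h y q = true then 1 else 0) +
          (∑ p, D (e false) (gg y) p q) * (if h y q = false then 1 else 0)
          = ∑ p, D (e false) (gg y) p q := by
        intro q
        cases hh : h y q <;> simp [hh]
      rw [Finset.sum_congr rfl fun q _ => hq1 q, Finset.sum_comm]
      exact hDsum (e false) (gg y)
    -- choose ps maximizing α false
    obtain ⟨ps, -, hps⟩ := Finset.exists_max_image Finset.univ (α false)
      ⟨Classical.arbitrary P, Finset.mem_univ _⟩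
    have hpsm : 1 / (Fintype.card P : ℝ) ≤ α false ps := by
      have h2 : ∑ p, α false p ≤ (Fintype.card P : ℝ) * α false ps := by
        calc ∑ p, α false p ≤ ∑ _p : P, α false ps :=
              Finset.sum_le_sum fun p _ => hps p (Finset.mem_univ p)
          _ = (Fintype.card P : ℝ) * α false ps := by
              rw [Finset.sum_const, Finset.card_univ, nsmul_eq_mul]
      rw [div_le_iff₀ hmpos]
      nlinarith [hα_sum false]
    have hps1 : α false ps ≤ 1 := by
      have := hα_sum false
      have h2 : α false ps ≤ ∑ p, α false p :=
        Finset.single_le_sum (fun p _ => hα_nonneg false p) (Finset.mem_univ ps)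
      linarith
    -- rewrite the value
    have hV : ∀ a p y, (∑ q, D (e a) (gg y) p q * N (f a p) y * (if h y q = a then 1 else 0))
        = c a p y * N (f a p) y := by
      intro a p y
      rw [hc, Finset.sum_mul]
      exact Finset.sum_congr rfl fun q _ => by ring
    have h3 : ∑ y, (∑ a : Bool, ∑ p, c a p y) * N (f false ps) y
        = ∑ a : Bool, ∑ p, ∑ y, c a p y * N (f false ps) y := by
      simp only [Finset.sum_mul]
      rw [Finset.sum_comm]
      exact Finset.sum_congr rfl fun a _ => Finset.sum_comm
    have h2 : ∑ a : Bool, ∑ p, ∑ y, c a p y * N (f false ps) y = 1 := by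
      rw [← h3]
      exact (Finset.sum_congr rfl fun y _ => by rw [hcsum y, one_mul]).trans (hNsum _)
    have hE : ∑ a : Bool, ∑ p, ∑ y, ∑ q,
        D (e a) (gg y) p q * N (f a p) y * (if h y q = a then 1 else 0)
        = (∑ a : Bool, ∑ p, ∑ y, c a p y * N (f false ps) y)
          + ∑ a : Bool, ∑ p, ∑ y, c a p y * (N (f a p) y - N (f false ps) y) := by
      rw [← Finset.sum_add_distrib]
      refine Finset.sum_congr rfl fun a _ => ?_
      rw [← Finset.sum_add_distrib]
      refine Finset.sum_congr rfl fun p _ => ?_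
      rw [← Finset.sum_add_distrib]
      refine Finset.sum_congr rfl fun y _ => ?_
      rw [hV a p y]; ring
    have hVal : (1 / 2 : ℝ) * ∑ a : Bool, ∑ p, ∑ y, ∑ q,
        D (e a) (gg y) p q * N (f a p) y * (if h y q = a then 1 else 0)
        = 1 / 2 + (1 / 2) * ∑ a : Bool, ∑ p, ∑ y,
            c a p y * (N (f a p) y - N (f false ps) y) := by
      rw [hE, h2]; ring
    -- bound each deviation term
    have hterm : ∀ a p, ∑ y, c a p y * (N (f a p) y - N (f false ps) y)
        ≤ α a p * (2 * (Succ N - 1 / 2)) := by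
      intro a p
      have h1 : ∀ y, c a p y * (N (f a p) y - N (f false ps) y)
          ≤ α a p * max (N (f a p) y - N (f false ps) y) 0 := by
        intro y
        rcases le_or_gt 0 (N (f a p) y - N (f false ps) y) with hd | hd
        · rw [max_eq_left hd]
          exact mul_le_mul_of_nonneg_right (hc_le a p y) hd
        · rw [max_eq_right hd.le, mul_zero]
          exact mul_nonpos_of_nonneg_of_nonpos (hc_nonneg a p y) hd.le
      calc ∑ y, c a p y * (N (f a p) y - N (f false ps) y)
          ≤ ∑ y, α a p * max (N (f a p) y - N (f false ps) y) 0 :=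
            Finset.sum_le_sum fun y _ => h1 y
        _ = α a p * ∑ y, max (N (f a p) y - N (f false ps) y) 0 := by
            rw [Finset.mul_sum]
        _ ≤ α a p * (2 * (Succ N - 1 / 2)) :=
            mul_le_mul_of_nonneg_left (hpos _ _) (hα_nonneg a p)
    have hzero : ∑ y, c false ps y * (N (f false ps) y - N (f false ps) y) = 0 := by
      simp
    have hSsum : ∑ a : Bool, ∑ p, ∑ y, c a p y * (N (f a p) y - N (f false ps) y)
        ≤ (1 - α false ps) * (2 * (Succ N - 1 / 2)) + 2 * (Succ N - 1 / 2) := by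
      rw [Fintype.sum_bool]
      have htrue : ∑ p, ∑ y, c true p y * (N (f true p) y - N (f false ps) y)
          ≤ 2 * (Succ N - 1 / 2) := by
        calc ∑ p, ∑ y, c true p y * (N (f true p) y - N (f false ps) y)
            ≤ ∑ p, α true p * (2 * (Succ N - 1 / 2)) :=
              Finset.sum_le_sum fun p _ => hterm true p
          _ = 2 * (Succ N - 1 / 2) := by rw [← Finset.sum_mul, hα_sum true, one_mul]
      have hfalse : ∑ p, ∑ y, c false p y * (N (f false p) y - N (f false ps) y)
          ≤ (1 - α false ps) * (2 * (Succ N - 1 / 2)) := by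
        rw [← Finset.add_sum_erase _ _ (Finset.mem_univ ps), hzero, zero_add]
        calc ∑ p ∈ Finset.univ.erase ps, ∑ y,
              c false p y * (N (f false p) y - N (f false ps) y)
            ≤ ∑ p ∈ Finset.univ.erase ps, α false p * (2 * (Succ N - 1 / 2)) :=
              Finset.sum_le_sum fun p _ => hterm false p
          _ = (∑ p ∈ Finset.univ.erase ps, α false p) * (2 * (Succ N - 1 / 2)) := by
              rw [Finset.sum_mul]
          _ = (1 - α false ps) * (2 * (Succ N - 1 / 2)) := by
              rw [Finset.sum_erase_eq_sub (Finset.mem_univ ps), hα_sum false]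
      linarith
    rw [hVal]
    have hprod : 0 ≤ (α false ps - 1 / (Fintype.card P : ℝ)) * (Succ N - 1 / 2) :=
      mul_nonneg (by linarith) (by linarith)
    nlinarith [hSsum, hprod]
  linarith

end
end

section
/- Let N be a classical channel with finite input alphabet X and finite output alphabet Y, let D, L, F be correlations with the same finite input alphabets R, S and output alphabets P, Q such that L is local, F is non-signaling, and D = α·L + (1−α)·F entrywise for some α ∈ [0,1]. Then Succ(N, D) ≤ α·Succ(N) + (1−α)·Succ_NS(N). -/
set_option linter.unusedSectionVars false
set_option linter.unusedVariables false


open scoped Matrix Kronecker BigOperators Matrix.Norms.L2Operator ComplexOrder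
open Matrix Finset

noncomputable section

-- AUX START
section Aux

variable {X Y R S P Q : Type*} [Fintype X] [Fintype Y] [Fintype R] [Fintype S]
    [Fintype P] [Fintype Q] [DecidableEq P] [DecidableEq Q] [DecidableEq Y]
    [Nonempty X] [Nonempty R] [Nonempty S]

def protVal (N : X → Y → ℝ) (D : R → S → P → Q → ℝ)
    (π : (Bool → R) × (Bool → P → X) × (Y → S) × (Y → Q → Bool)) : ℝ :=
  (1 / 2) * ∑ a : Bool, ∑ p, ∑ y, ∑ q,
    D (π.1 a) (π.2.2.1 y) p q * N (π.2.1 a p) y *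
      (if π.2.2.2 y q = a then 1 else 0)

lemma succD_eq (N : X → Y → ℝ) (D : R → S → P → Q → ℝ) :
    SuccD N D = ⨆ π, protVal N D π := rfl

lemma protVal_add (N : X → Y → ℝ) (D₁ D₂ : R → S → P → Q → ℝ) (π) :
    protVal N (fun r s p q => D₁ r s p q + D₂ r s p q) π
      = protVal N D₁ π + protVal N D₂ π := by
  simp only [protVal, add_mul, Finset.sum_add_distrib]
  ring

lemma protVal_smul (N : X → Y → ℝ) (c : ℝ) (D : R → S → P → Q → ℝ) (π) :
    protVal N (fun r s p q => c * D r s p q) π = c * protVal N D π := by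
  simp only [protVal, mul_assoc, ← Finset.mul_sum]
  ring

lemma protVal_zero (N : X → Y → ℝ) (π) :
    protVal N (fun _ _ _ _ => (0:ℝ) : R → S → P → Q → ℝ) π = 0 := by
  simp [protVal]

lemma protVal_sum (N : X → Y → ℝ) (n : ℕ) (w : Fin n → ℝ)
    (G : Fin n → R → S → P → Q → ℝ) (π) :
    protVal N (fun r s p q => ∑ i, w i * G i r s p q) π
      = ∑ i, w i * protVal N (G i) π := by
  induction n with
  | zero => simp [protVal_zero]
  | succ n ih =>
      simp only [Fin.sum_univ_succ]
      rw [← ih (fun i => w i.succ) (fun i => G i.succ), ← protVal_smul, ← protVal_add]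

lemma protVal_le_one (N : X → Y → ℝ) (hN : IsChannel N)
    (D : R → S → P → Q → ℝ) (hD : IsCorrelation D) (hDns : NonSignaling D) (π) :
    protVal N D π ≤ 1 := by
  obtain ⟨e, f, g, h⟩ := π
  have s₀ : S := Classical.arbitrary S
  have key : ∀ a : Bool,
      (∑ p, ∑ y, ∑ q, D (e a) (g y) p q * N (f a p) y *
        (if h y q = a then 1 else 0)) ≤ 1 := by
    intro a
    have h1 : (∑ p, ∑ y, ∑ q, D (e a) (g y) p q * N (f a p) y *
        (if h y q = a then 1 else 0))
        ≤ ∑ p, ∑ y, ∑ q, D (e a) (g y) p q * N (f a p) y := by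
      refine Finset.sum_le_sum fun p _ => Finset.sum_le_sum fun y _ =>
        Finset.sum_le_sum fun q _ => ?_
      have hnn : 0 ≤ D (e a) (g y) p q * N (f a p) y :=
        mul_nonneg (hD.1 _ _ _ _) (hN.1 _ _)
      split <;> simp [hnn]
    have h2 : (∑ p, ∑ y, ∑ q, D (e a) (g y) p q * N (f a p) y) = 1 := by
      calc (∑ p, ∑ y, ∑ q, D (e a) (g y) p q * N (f a p) y)
          = ∑ p, ∑ y, (∑ q, D (e a) (g y) p q) * N (f a p) y := by
            simp [Finset.sum_mul]
        _ = ∑ p, ∑ y, (∑ q, D (e a) s₀ p q) * N (f a p) y := by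
            refine Finset.sum_congr rfl fun p _ => Finset.sum_congr rfl fun y _ => ?_
            rw [hDns.1 (e a) p (g y) s₀]
        _ = ∑ p, (∑ q, D (e a) s₀ p q) * ∑ y, N (f a p) y := by
            simp [Finset.mul_sum]
        _ = ∑ p, ∑ q, D (e a) s₀ p q := by
            refine Finset.sum_congr rfl fun p _ => ?_
            rw [hN.2 (f a p), mul_one]
        _ = 1 := hD.2 _ _
    linarith
  have : (∑ a : Bool, ∑ p, ∑ y, ∑ q, D (e a) (g y) p q * N (f a p) y *
      (if h y q = a then 1 else 0)) ≤ 2 := by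
    rw [Fintype.sum_bool]
    linarith [key true, key false]
  simp only [protVal]
  linarith

lemma protVal_localdet_le (N : X → Y → ℝ) (Ld : R → S → P → Q → ℝ)
    (hLd : IsLocalDet Ld) (π) : protVal N Ld π ≤ Succ N := by
  obtain ⟨φ, ψ, hφψ⟩ := hLd
  obtain ⟨e, f, g, h⟩ := π
  have heq : protVal N Ld (e, f, g, h)
      = (1 / 2) * (∑ y, if (fun y => h y (ψ (g y))) y = false
            then N (f false (φ (e false))) y else 0) +
        (1 / 2) * (∑ y, if (fun y => h y (ψ (g y))) y = true
            then N (f true (φ (e true))) y else 0) := by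
    have collapse : ∀ a : Bool,
        (∑ p, ∑ y, ∑ q, (if p = φ (e a) then 1 else 0) * (if q = ψ (g y) then 1 else 0)
            * N (f a p) y * (if h y q = a then 1 else 0))
        = ∑ y, if h y (ψ (g y)) = a then N (f a (φ (e a))) y else 0 := by
      intro a
      rw [Finset.sum_comm]
      refine Finset.sum_congr rfl fun y _ => ?_
      rw [Finset.sum_eq_single (φ (e a)) (fun p _ hp => by simp [hp]) (by simp)]
      rw [Finset.sum_eq_single (ψ (g y)) (fun q _ hq => by simp [hq]) (by simp)]
      simp
    simp only [protVal, hφψ, Fintype.sum_bool, collapse]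
    ring
  rw [heq]
  exact le_ciSup (f := fun z : X × X × (Y → Bool) =>
      (1 / 2) * (∑ y, if z.2.2 y = false then N z.1 y else 0) +
        (1 / 2) * (∑ y, if z.2.2 y = true then N z.2.1 y else 0))
    (Set.finite_range _).bddAbove
    ⟨f false (φ (e false)), f true (φ (e true)), fun y => h y (ψ (g y))⟩

lemma protVal_local_le (N : X → Y → ℝ) (L : R → S → P → Q → ℝ)
    (hL : IsLocal L) (π) : protVal N L π ≤ Succ N := by
  obtain ⟨n, w, Li, hw0, hw1, hLd, hLsum⟩ := hL
  have hLfun : L = fun r s p q => ∑ i, w i * Li i r s p q := by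
    funext r s p q; exact hLsum r s p q
  rw [hLfun, protVal_sum]
  calc (∑ i, w i * protVal N (Li i) π) ≤ ∑ i, w i * Succ N :=
        Finset.sum_le_sum fun i _ =>
          mul_le_mul_of_nonneg_left (protVal_localdet_le N (Li i) (hLd i) π) (hw0 i)
    _ = Succ N := by rw [← Finset.sum_mul, hw1, one_mul]

lemma succD_le_one (N : X → Y → ℝ) (hN : IsChannel N)
    (D : R → S → P → Q → ℝ) (hD : IsCorrelation D) (hDns : NonSignaling D) :
    SuccD N D ≤ 1 := by
  rw [succD_eq]
  exact ciSup_le fun π => protVal_le_one N hN D hD hDns π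

lemma succD_le_succNS (N : X → Y → ℝ) (hN : IsChannel N)
    (F : R → S → P → Q → ℝ) (hFcor : IsCorrelation F) (hFns : NonSignaling F) :
    SuccD N F ≤ SuccNS N := by
  haveI hPne : Nonempty P := by
    by_contra hP
    haveI := not_nonempty_iff.mp hP
    have := hFcor.2 (Classical.arbitrary R) (Classical.arbitrary S)
    simp at this
  haveI hQne : Nonempty Q := by
    by_contra hQ
    haveI := not_nonempty_iff.mp hQ
    have := hFcor.2 (Classical.arbitrary R) (Classical.arbitrary S)
    simp at this
  obtain ⟨nR, hR⟩ : ∃ n, Fintype.card R = n + 1 :=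
    ⟨Fintype.card R - 1, (Nat.succ_pred_eq_of_pos Fintype.card_pos).symm⟩
  obtain ⟨nS, hS⟩ : ∃ n, Fintype.card S = n + 1 :=
    ⟨Fintype.card S - 1, (Nat.succ_pred_eq_of_pos Fintype.card_pos).symm⟩
  set eR : R ≃ Fin (nR + 1) := Fintype.equivFinOfCardEq hR
  set eS : S ≃ Fin (nS + 1) := Fintype.equivFinOfCardEq hS
  set eP : P ≃ Fin (Fintype.card P) := Fintype.equivFin P
  set eQ : Q ≃ Fin (Fintype.card Q) := Fintype.equivFin Q
  set F' : Fin (nR + 1) → Fin (nS + 1) → Fin (Fintype.card P) → Fin (Fintype.card Q) → ℝ :=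
    fun r s p q => F (eR.symm r) (eS.symm s) (eP.symm p) (eQ.symm q) with hF'
  have hF'def : ∀ r s p q, F' r s p q
      = F (eR.symm r) (eS.symm s) (eP.symm p) (eQ.symm q) := fun _ _ _ _ => rfl
  have hF'cor : IsCorrelation F' := by
    refine ⟨fun r s p q => hFcor.1 _ _ _ _, fun r s => ?_⟩
    rw [← hFcor.2 (eR.symm r) (eS.symm s)]
    refine (Fintype.sum_equiv eP _ _ fun p => ?_).symm
    refine Fintype.sum_equiv eQ _ _ fun q => ?_
    simp [hF'def]
  have hF'ns : NonSignaling F' := by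
    constructor
    · intro r p s s'
      have h1 := hFns.1 (eR.symm r) (eP.symm p) (eS.symm s) (eS.symm s')
      calc (∑ q, F' r s p q)
          = ∑ q, F (eR.symm r) (eS.symm s) (eP.symm p) q :=
            (Fintype.sum_equiv eQ _ _ fun q => by simp [hF'def]).symm
        _ = ∑ q, F (eR.symm r) (eS.symm s') (eP.symm p) q := h1
        _ = ∑ q, F' r s' p q :=
            Fintype.sum_equiv eQ _ _ fun q => by simp [hF'def]
    · intro s q r r'
      have h1 := hFns.2 (eS.symm s) (eQ.symm q) (eR.symm r) (eR.symm r')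
      calc (∑ p, F' r s p q)
          = ∑ p, F (eR.symm r) (eS.symm s) p (eQ.symm q) :=
            (Fintype.sum_equiv eP _ _ fun p => by simp [hF'def]).symm
        _ = ∑ p, F (eR.symm r') (eS.symm s) p (eQ.symm q) := h1
        _ = ∑ p, F' r' s p q :=
            Fintype.sum_equiv eP _ _ fun p => by simp [hF'def]
  have hle : SuccD N F ≤ SuccD N F' := by
    rw [succD_eq, succD_eq]
    refine ciSup_le fun π => ?_
    obtain ⟨e, f, g, h⟩ := π
    have hval : protVal N F (e, f, g, h) = protVal N F'
        (fun a => eR (e a), fun a p => f a (eP.symm p), fun y => eS (g y),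
          fun y q => h y (eQ.symm q)) := by
      simp only [protVal]
      refine congrArg _ (Finset.sum_congr rfl fun a _ => ?_)
      refine Fintype.sum_equiv eP _ _ fun p => ?_
      refine Finset.sum_congr rfl fun y _ => ?_
      refine Fintype.sum_equiv eQ _ _ fun q => ?_
      simp [hF'def]
    rw [hval]
    exact le_ciSup (f := fun π' => protVal N F' π') (Set.finite_range _).bddAbove _
  refine hle.trans (le_csSup ?_ ?_)
  · refine ⟨1, ?_⟩
    rintro v ⟨nR', nS', nP', nQ', D', hcor, hns, rfl⟩
    exact succD_le_one N hN D' hcor hns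
  · exact ⟨nR, nS, Fintype.card P, Fintype.card Q, F', hF'cor, hF'ns, rfl⟩

end Aux

/-- If `D = α L + (1 − α) F` with `L` local and `F` non-signaling, then
`Succ(N, D) ≤ α Succ(N) + (1 − α) Succ_NS(N)`. -/
theorem succD_convex_bound {X Y R S P Q : Type*} [Fintype X] [Fintype Y] [Fintype R]
    [Fintype S] [Fintype P] [Fintype Q] [DecidableEq P] [DecidableEq Q]
    [DecidableEq Y] [Nonempty X] [Nonempty R] [Nonempty S]
    (N : X → Y → ℝ) (hN : IsChannel N)
    (D L F : R → S → P → Q → ℝ) (α : ℝ) (hα0 : 0 ≤ α) (hα1 : α ≤ 1)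
    (hD : IsCorrelation D) (hLloc : IsLocal L) (hLcor : IsCorrelation L)
    (hFcor : IsCorrelation F) (hFns : NonSignaling F)
    (hdecomp : ∀ r s p q, D r s p q = α * L r s p q + (1 - α) * F r s p q) :
    SuccD N D ≤ α * Succ N + (1 - α) * SuccNS N := by
  have hDfun : D = fun r s p q => α * L r s p q + (1 - α) * F r s p q := by
    funext r s p q; exact hdecomp r s p q
  rw [succD_eq]
  refine ciSup_le fun π => ?_
  have hsplit : protVal N D π = α * protVal N L π + (1 - α) * protVal N F π := by
    rw [hDfun,
      protVal_add N (fun r s p q => α * L r s p q) (fun r s p q => (1 - α) * F r s p q) π,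
      protVal_smul, protVal_smul]
  rw [hsplit]
  have h1 : protVal N L π ≤ Succ N := protVal_local_le N L hLloc π
  have h2 : protVal N F π ≤ SuccNS N := by
    have hstep : protVal N F π ≤ SuccD N F := by
      rw [succD_eq]
      exact le_ciSup (f := fun π => protVal N F π) (Set.finite_range _).bddAbove π
    exact hstep.trans (succD_le_succNS N hN F hFcor hFns)
  have hβ : (0:ℝ) ≤ 1 - α := by linarith
  exact add_le_add (mul_le_mul_of_nonneg_left h1 hα0) (mul_le_mul_of_nonneg_left h2 hβ)

end
end
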